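/- arXiv:1911.03273 — 5 statements merged into one kernel-verified Lean document; each statement's English description precedes it below -/
import Mathlib

section
/- Assume (Hg) and (HΦ). Then for any q₀ ∈ (0,a) and q₁ ∈ (0,1−a) there exist constants μ > 0 and C ≥ 1 such that the functions u⁺_{i,j}(t) = Φ(i − ct + Cq₀(1 − e^{−μt})) + q₀e^{−μt} and u⁻_{i,j}(t) = Φ(i − ct − Cq₁(1 − e^{−μt})) − q₁e^{−μt} are, respectively, a super-solution and a sub-solution of the discrete Allen–Cahn equation on [0,∞). -/
open Filter Topology MeasureTheory Set

noncomputable section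

/-- Right-hand side of the discrete Allen-Cahn equation on `ℤ²`. -/
def acRHS (g : ℝ → ℝ) (w : ℤ → ℤ → ℝ) (i j : ℤ) : ℝ :=
  w (i + 1) j + w (i - 1) j + w i (j + 1) + w i (j - 1) - 4 * w i j + g (w i j)

/-- The putative super-solution `u⁺`. -/
def uPlus (Φ : ℝ → ℝ) (c C q μ : ℝ) (t : ℝ) (i : ℤ) (_j : ℤ) : ℝ :=
  Φ ((i : ℝ) - c * t + C * q * (1 - Real.exp (-μ * t))) + q * Real.exp (-μ * t)

/-- The putative sub-solution `u⁻`. -/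
def uMinus (Φ : ℝ → ℝ) (c C q μ : ℝ) (t : ℝ) (i : ℤ) (_j : ℤ) : ℝ :=
  Φ ((i : ℝ) - c * t - C * q * (1 - Real.exp (-μ * t))) - q * Real.exp (-μ * t)

/-- The acResidual `J[w] = ẇ − Δ⁺w − g(w)` of the discrete Allen-Cahn equation. -/
def acResidual (g : ℝ → ℝ) (w : ℝ → ℤ → ℤ → ℝ) (i j : ℤ) (t : ℝ) : ℝ :=
  deriv (fun s => w s i j) t -
    (w t (i + 1) j + w t (i - 1) j + w t i (j + 1) + w t i (j - 1) - 4 * w t i j) -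
    g (w t i j)

/-- Derivative of a monotone differentiable function is nonnegative. -/
lemma aux_deriv_nonneg_of_monotone {Φ : ℝ → ℝ} (h : Monotone Φ) (x : ℝ) : 0 ≤ deriv Φ x := by
  rcases em (DifferentiableAt ℝ Φ x) with hd | hd
  · have hs := hd.hasDerivAt
    rw [hasDerivAt_iff_tendsto_slope] at hs
    have h2 : Tendsto (slope Φ x) (𝓝[>] x) (𝓝 (deriv Φ x)) :=
      hs.mono_left (nhdsWithin_mono x fun y hy => ne_of_gt hy)
    refine ge_of_tendsto h2 ?_
    filter_upwards [self_mem_nhdsWithin] with y hy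
    rw [slope_def_field]
    have hxy : x < y := hy
    have : Φ x ≤ Φ y := h (le_of_lt hxy)
    exact div_nonneg (by linarith) (by linarith)
  · simp [deriv_zero_of_not_differentiableAt hd]

/-- Mean value inequality. -/
lemma aux_mvt_le (g : ℝ → ℝ) (hg : Differentiable ℝ g) {x y β : ℝ} (hxy : x < y)
    (hd : ∀ z ∈ Set.Ioo x y, deriv g z ≤ -β) : g y - g x ≤ -β * (y - x) := by
  obtain ⟨ζ, hζ, hval⟩ := exists_hasDerivAt_eq_slope g (deriv g) hxy
    hg.continuous.continuousOn (fun z _ => (hg z).hasDerivAt)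
  have h1 := hd ζ hζ
  rw [hval] at h1
  have h2 : (0:ℝ) < y - x := sub_pos.mpr hxy
  calc g y - g x = (g y - g x)/(y-x)*(y-x) := by field_simp
  _ ≤ -β * (y - x) := by nlinarith

/-- The time-derivative of the profile functions. -/
lemma aux_hasDerivAt (Φ : ℝ → ℝ) (hΦ : Differentiable ℝ Φ) (c A B μ : ℝ) (x : ℝ) (t : ℝ) :
    HasDerivAt (fun s : ℝ => Φ (x - c*s + A*(1 - Real.exp (-μ*s))) + B * Real.exp (-μ*s))
      (deriv Φ (x - c*t + A*(1 - Real.exp (-μ*t))) * (-c + A*(μ * Real.exp (-μ*t)))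
        + B * (-μ * Real.exp (-μ*t))) t := by
  have he : HasDerivAt (fun s : ℝ => Real.exp (-μ*s)) (-μ * Real.exp (-μ*t)) t := by
    have h1 : HasDerivAt (fun s : ℝ => -μ*s) (-μ) t := by
      simpa using (hasDerivAt_id t).const_mul (-μ)
    simpa [mul_comm] using h1.exp
  have hin : HasDerivAt (fun s : ℝ => x - c*s + A*(1 - Real.exp (-μ*s)))
      (-c + A*(μ * Real.exp (-μ*t))) t := by
    have h2 : HasDerivAt (fun s : ℝ => x - c*s) (-c) t := by
      simpa using ((hasDerivAt_id t).const_mul c).const_sub x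
    have h3 : HasDerivAt (fun s : ℝ => A*(1 - Real.exp (-μ*s)))
        (A*(μ * Real.exp (-μ*t))) t := by
      have := (he.const_sub 1).const_mul A
      exact this.congr_deriv (by ring)
    exact h2.add h3
  exact ((hΦ _).hasDerivAt.comp t hin).add (he.const_mul B) |>.congr_deriv (by ring)

/-- Explicit formula for the residual of `uPlus`. -/
lemma acResidual_uPlus (g Φ : ℝ → ℝ) (hΦ : Differentiable ℝ Φ) (c C q μ : ℝ)
    (hPhieq : ∀ ξ : ℝ, -c * deriv Φ ξ = Φ (ξ + 1) + Φ (ξ - 1) - 2 * Φ ξ + g (Φ ξ))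
    (i j : ℤ) (t : ℝ) :
    acResidual g (uPlus Φ c C q μ) i j t =
      C*q*μ*Real.exp (-μ*t) * deriv Φ ((i:ℝ) - c*t + C*q*(1 - Real.exp (-μ*t)))
      - q*μ*Real.exp (-μ*t)
      + g (Φ ((i:ℝ) - c*t + C*q*(1 - Real.exp (-μ*t))))
      - g (Φ ((i:ℝ) - c*t + C*q*(1 - Real.exp (-μ*t))) + q*Real.exp (-μ*t)) := by
  have hd : deriv (fun s => uPlus Φ c C q μ s i j) t =
      deriv Φ ((i:ℝ) - c*t + C*q*(1 - Real.exp (-μ*t))) * (-c + C*q*(μ*Real.exp (-μ*t)))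
        + q*(-μ*Real.exp (-μ*t)) := by
    have := (aux_hasDerivAt Φ hΦ c (C*q) q μ (i:ℝ) t).deriv
    rw [← this]
    rfl
  have hp : ((i+1 : ℤ):ℝ) = (i:ℝ)+1 := by push_cast; ring
  have hm : ((i-1 : ℤ):ℝ) = (i:ℝ)-1 := by push_cast; ring
  have E1 := hPhieq ((i:ℝ) - c*t + C*q*(1 - Real.exp (-μ*t)))
  unfold acResidual uPlus
  simp only [uPlus] at hd
  rw [hd, hp, hm]
  have h1 : (i:ℝ)+1 - c*t + C*q*(1 - Real.exp (-μ*t))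
      = ((i:ℝ) - c*t + C*q*(1 - Real.exp (-μ*t))) + 1 := by ring
  have h2 : (i:ℝ)-1 - c*t + C*q*(1 - Real.exp (-μ*t))
      = ((i:ℝ) - c*t + C*q*(1 - Real.exp (-μ*t))) - 1 := by ring
  rw [h1, h2]
  linear_combination E1

/-- Explicit formula for the residual of `uMinus`. -/
lemma acResidual_uMinus (g Φ : ℝ → ℝ) (hΦ : Differentiable ℝ Φ) (c C q μ : ℝ)
    (hPhieq : ∀ ξ : ℝ, -c * deriv Φ ξ = Φ (ξ + 1) + Φ (ξ - 1) - 2 * Φ ξ + g (Φ ξ))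
    (i j : ℤ) (t : ℝ) :
    acResidual g (uMinus Φ c C q μ) i j t =
      -(C*q*μ*Real.exp (-μ*t) * deriv Φ ((i:ℝ) - c*t - C*q*(1 - Real.exp (-μ*t))))
      + q*μ*Real.exp (-μ*t)
      + g (Φ ((i:ℝ) - c*t - C*q*(1 - Real.exp (-μ*t))))
      - g (Φ ((i:ℝ) - c*t - C*q*(1 - Real.exp (-μ*t))) - q*Real.exp (-μ*t)) := by
  have hfun : ∀ x : ℝ, ∀ s : ℝ, x - c*s - C*q*(1 - Real.exp (-μ*s))
      = x - c*s + (-(C*q))*(1 - Real.exp (-μ*s)) := by intro x s; ring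
  have hd : deriv (fun s => uMinus Φ c C q μ s i j) t =
      deriv Φ ((i:ℝ) - c*t - C*q*(1 - Real.exp (-μ*t))) * (-c + (-(C*q))*(μ*Real.exp (-μ*t)))
        + (-q)*(-μ*Real.exp (-μ*t)) := by
    have h0 := (aux_hasDerivAt Φ hΦ c (-(C*q)) (-q) μ (i:ℝ) t).deriv
    rw [← hfun] at h0
    rw [← h0]
    apply congrArg (fun f => deriv f t)
    funext s
    unfold uMinus
    rw [hfun]
    ring
  have hp : ((i+1 : ℤ):ℝ) = (i:ℝ)+1 := by push_cast; ring
  have hm : ((i-1 : ℤ):ℝ) = (i:ℝ)-1 := by push_cast; ring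
  have E1 := hPhieq ((i:ℝ) - c*t - C*q*(1 - Real.exp (-μ*t)))
  unfold acResidual uMinus
  simp only [uMinus] at hd
  rw [hd, hp, hm]
  have h1 : (i:ℝ)+1 - c*t - C*q*(1 - Real.exp (-μ*t))
      = ((i:ℝ) - c*t - C*q*(1 - Real.exp (-μ*t))) + 1 := by ring
  have h2 : (i:ℝ)-1 - c*t - C*q*(1 - Real.exp (-μ*t))
      = ((i:ℝ) - c*t - C*q*(1 - Real.exp (-μ*t))) - 1 := by ring
  rw [h1, h2]
  linear_combination E1

/-- Positivity of the wave profile derivative. -/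
lemma aux_phi_deriv_pos (g Φ : ℝ → ℝ) (c : ℝ) (hc : c ≠ 0)
    (hg : ContDiff ℝ 2 g) (hPhiC1 : ContDiff ℝ 1 Φ) (hPhimono : StrictMono Φ)
    (hΦ01 : ∀ x, Φ x ∈ Icc (0:ℝ) 1)
    (hPhieq : ∀ ξ : ℝ, -c * deriv Φ ξ = Φ (ξ + 1) + Φ (ξ - 1) - 2 * Φ ξ + g (Φ ξ)) :
    ∀ x, 0 < deriv Φ x := by
  set ψ := deriv Φ with hψdef
  have hΦd : Differentiable ℝ Φ := hPhiC1.differentiable one_ne_zero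
  have hgd : Differentiable ℝ g := hg.differentiable two_ne_zero
  have hψ0 : ∀ x, 0 ≤ ψ x := aux_deriv_nonneg_of_monotone hPhimono.monotone
  have hψcont : Continuous ψ := hPhiC1.continuous_deriv le_rfl
  have hψeq : ψ = fun x => (Φ (x+1) + Φ (x-1) - 2 * Φ x + g (Φ x)) / (-c) := by
    funext x
    rw [eq_div_iff (neg_ne_zero.mpr hc)]
    linarith [hPhieq x]
  set D : ℝ → ℝ := fun x => (ψ (x+1) + ψ (x-1) - 2 * ψ x + deriv g (Φ x) * ψ x) / (-c) with hDdef
  have hDD : ∀ x, HasDerivAt ψ (D x) x := by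
    intro x
    rw [hψeq]
    have h1 : HasDerivAt (fun y : ℝ => Φ (y+1)) (ψ (x+1)) x := by
      simpa [Function.comp_def, hψdef] using (hΦd (x+1)).hasDerivAt.comp x ((hasDerivAt_id x).add_const 1)
    have h2 : HasDerivAt (fun y : ℝ => Φ (y-1)) (ψ (x-1)) x := by
      simpa [Function.comp_def, hψdef] using (hΦd (x-1)).hasDerivAt.comp x ((hasDerivAt_id x).sub_const 1)
    have h3 : HasDerivAt (fun y : ℝ => g (Φ y)) (deriv g (Φ x) * ψ x) x :=
      (hgd (Φ x)).hasDerivAt.comp x (hΦd x).hasDerivAt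
    have h4 : HasDerivAt (fun y : ℝ => 2 * Φ y) (2 * ψ x) x := (hΦd x).hasDerivAt.const_mul 2
    exact (((h1.add h2).sub h4).add h3).div_const (-c)
  obtain ⟨G, hG⟩ := (isCompact_Icc (a := (0:ℝ)) (b := 1)).exists_bound_of_continuousOn
    (hg.continuous_deriv (by norm_num)).continuousOn
  have hG0 : 0 ≤ G := le_trans (norm_nonneg _) (hG 0 (by simp))
  set M : ℝ := 2 + G with hMdef
  have hM0 : 0 < M := by linarith
  have hcancel : ∀ y : ℝ, c * (y / (-c)) = -y := fun y => by
    rw [div_neg, mul_neg, mul_div_assoc', mul_div_cancel_left₀ _ hc]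
  have hcD : ∀ x, c * D x ≤ M * ψ x := by
    intro x
    have hval : c * D x = -(ψ (x+1) + ψ (x-1) - 2 * ψ x + deriv g (Φ x) * ψ x) := by
      rw [hDdef]; exact hcancel _
    rw [hval]
    have hb : |deriv g (Φ x)| ≤ G := by
      have := hG (Φ x) (hΦ01 x); simpa [Real.norm_eq_abs] using this
    have h5 : -(deriv g (Φ x)) ≤ G := by
      have := neg_abs_le (deriv g (Φ x)); linarith
    have h6 : -(deriv g (Φ x)) * ψ x ≤ G * ψ x :=
      mul_le_mul_of_nonneg_right h5 (hψ0 x)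
    have := hψ0 (x+1); have := hψ0 (x-1); have := hψ0 x
    nlinarith
  by_contra hcon
  push_neg at hcon
  obtain ⟨ξ0, hξ0⟩ := hcon
  have hψξ0 : ψ ξ0 = 0 := le_antisymm hξ0 (hψ0 ξ0)
  rcases hc.lt_or_gt with hneg | hpos
  · -- c < 0 : ψ vanishes on (-∞, ξ0]
    set K : ℝ := M / c with hKdef
    have hKD : ∀ x, K * ψ x ≤ D x := by
      intro x
      have h := hcD x
      rw [hKdef, div_mul_eq_mul_div, div_le_iff_of_neg hneg]
      nlinarith
    have h_hd : ∀ x, HasDerivAt (fun y => ψ y * Real.exp (-K*y)) ((D x - K*ψ x) * Real.exp (-K*x)) x := by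
      intro x
      have he : HasDerivAt (fun y : ℝ => Real.exp (-K*y)) (-K * Real.exp (-K*x)) x := by
        have h1 : HasDerivAt (fun y : ℝ => -K*y) (-K) x := by
          simpa using (hasDerivAt_id x).const_mul (-K)
        simpa [mul_comm] using h1.exp
      exact ((hDD x).mul he).congr_deriv (by ring)
    have hmono : Monotone (fun y => ψ y * Real.exp (-K*y)) := by
      apply monotone_of_deriv_nonneg (fun x => (h_hd x).differentiableAt)
      intro x
      rw [(h_hd x).deriv]
      exact mul_nonneg (by linarith [hKD x]) (Real.exp_pos _).le
    have hvanish : ∀ x, x ≤ ξ0 → ψ x = 0 := by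
      intro x hx
      have h1 : ψ x * Real.exp (-K*x) ≤ ψ ξ0 * Real.exp (-K*ξ0) := hmono hx
      rw [hψξ0, zero_mul] at h1
      have h2 : 0 ≤ ψ x * Real.exp (-K*x) := mul_nonneg (hψ0 x) (Real.exp_pos _).le
      have h3 : ψ x * Real.exp (-K*x) = 0 := le_antisymm h1 h2
      rcases mul_eq_zero.mp h3 with h | h
      · exact h
      · exact absurd h (Real.exp_pos _).ne'
    obtain ⟨ζ, hζ, hval⟩ := exists_hasDerivAt_eq_slope Φ ψ (by linarith : ξ0 - 1 < ξ0)
      hΦd.continuous.continuousOn (fun z _ => (hΦd z).hasDerivAt)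
    have hz : ψ ζ = 0 := hvanish ζ (le_of_lt hζ.2)
    have hlt : Φ (ξ0 - 1) < Φ ξ0 := hPhimono (by linarith)
    rw [hz] at hval
    have : 0 < (Φ ξ0 - Φ (ξ0 - 1)) / (ξ0 - (ξ0 - 1)) :=
      div_pos (by linarith) (by norm_num)
    linarith
  · -- c > 0 : ψ vanishes on [ξ0, ∞)
    set K : ℝ := M / c with hKdef
    have hKD : ∀ x, D x ≤ K * ψ x := by
      intro x
      have h := hcD x
      rw [hKdef, div_mul_eq_mul_div, le_div_iff₀ hpos]
      nlinarith
    have h_hd : ∀ x, HasDerivAt (fun y => ψ y * Real.exp (-K*y)) ((D x - K*ψ x) * Real.exp (-K*x)) x := by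
      intro x
      have he : HasDerivAt (fun y : ℝ => Real.exp (-K*y)) (-K * Real.exp (-K*x)) x := by
        have h1 : HasDerivAt (fun y : ℝ => -K*y) (-K) x := by
          simpa using (hasDerivAt_id x).const_mul (-K)
        simpa [mul_comm] using h1.exp
      exact ((hDD x).mul he).congr_deriv (by ring)
    have hanti : Antitone (fun y => ψ y * Real.exp (-K*y)) := by
      apply antitone_of_deriv_nonpos (fun x => (h_hd x).differentiableAt)
      intro x
      rw [(h_hd x).deriv]
      exact mul_nonpos_of_nonpos_of_nonneg (by linarith [hKD x]) (Real.exp_pos _).le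
    have hvanish : ∀ x, ξ0 ≤ x → ψ x = 0 := by
      intro x hx
      have h1 : ψ x * Real.exp (-K*x) ≤ ψ ξ0 * Real.exp (-K*ξ0) := hanti hx
      rw [hψξ0, zero_mul] at h1
      have h2 : 0 ≤ ψ x * Real.exp (-K*x) := mul_nonneg (hψ0 x) (Real.exp_pos _).le
      have h3 : ψ x * Real.exp (-K*x) = 0 := le_antisymm h1 h2
      rcases mul_eq_zero.mp h3 with h | h
      · exact h
      · exact absurd h (Real.exp_pos _).ne'
    obtain ⟨ζ, hζ, hval⟩ := exists_hasDerivAt_eq_slope Φ ψ (by linarith : ξ0 < ξ0 + 1)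
      hΦd.continuous.continuousOn (fun z _ => (hΦd z).hasDerivAt)
    have hz : ψ ζ = 0 := hvanish ζ (le_of_lt hζ.1)
    have hlt : Φ ξ0 < Φ (ξ0 + 1) := hPhimono (by linarith)
    rw [hz] at hval
    have : 0 < (Φ (ξ0 + 1) - Φ ξ0) / (ξ0 + 1 - ξ0) :=
      div_pos (by linarith) (by norm_num)
    linarith

set_option maxHeartbeats 1000000 in
theorem planar_super_and_sub_solutions
    (g : ℝ → ℝ) (a c : ℝ) (Φ : ℝ → ℝ)
    -- (Hg): g is C² and bistable
    (hg : ContDiff ℝ 2 g) (ha : a ∈ Set.Ioo (0 : ℝ) 1)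
    (hg0 : g 0 = 0) (hga : g a = 0) (hg1 : g 1 = 0)
    (hdg0 : deriv g 0 < 0) (hdg1 : deriv g 1 < 0)
    (hgpos : ∀ s : ℝ, s < 0 ∨ (a < s ∧ s < 1) → 0 < g s)
    (hgneg : ∀ s : ℝ, (0 < s ∧ s < a) ∨ 1 < s → g s < 0)
    -- (HΦ): horizontal travelling wave with nonzero speed
    (hc : c ≠ 0) (hPhiC1 : ContDiff ℝ 1 Φ) (hPhimono : StrictMono Φ)
    (hPhibot : Tendsto Φ atBot (nhds 0)) (hPhitop : Tendsto Φ atTop (nhds 1))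
    (hPhihalf : Φ 0 = 1 / 2)
    (hPhieq : ∀ ξ : ℝ, -c * deriv Φ ξ = Φ (ξ + 1) + Φ (ξ - 1) - 2 * Φ ξ + g (Φ ξ))
    :
    ∀ q0 : ℝ, q0 ∈ Set.Ioo 0 a → ∀ q1 : ℝ, q1 ∈ Set.Ioo 0 (1 - a) →
      ∃ μ : ℝ, 0 < μ ∧ ∃ C : ℝ, 1 ≤ C ∧
        (∀ i j : ℤ, ∀ t : ℝ, 0 ≤ t → 0 ≤ acResidual g (uPlus Φ c C q0 μ) i j t) ∧
        (∀ i j : ℤ, ∀ t : ℝ, 0 ≤ t → acResidual g (uMinus Φ c C q1 μ) i j t ≤ 0) := by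
  intro q0 hq0 q1 hq1
  obtain ⟨hq00, hq0a⟩ := hq0
  obtain ⟨hq10, hq11⟩ := hq1
  obtain ⟨ha0, ha1⟩ := ha
  have hΦd : Differentiable ℝ Φ := hPhiC1.differentiable one_ne_zero
  have hgd : Differentiable ℝ g := hg.differentiable two_ne_zero
  have hΦ01 : ∀ x, Φ x ∈ Icc (0:ℝ) 1 := by
    intro x
    constructor
    · refine le_of_tendsto hPhibot ?_
      filter_upwards [eventually_le_atBot x] with y hy
      exact hPhimono.monotone hy
    · refine ge_of_tendsto hPhitop ?_
      filter_upwards [eventually_ge_atTop x] with y hy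
      exact hPhimono.monotone hy
  have hψpos : ∀ x, 0 < deriv Φ x :=
    aux_phi_deriv_pos g Φ c hc hg hPhiC1 hPhimono hΦ01 hPhieq
  -- Lipschitz-type bound on [-1,2]
  obtain ⟨L, hLb⟩ := (isCompact_Icc (a := (-1:ℝ)) (b := 2)).exists_bound_of_continuousOn
    (hg.continuous_deriv one_le_two).continuousOn
  have hL0 : 0 ≤ L := le_trans (norm_nonneg _) (hLb 0 (by norm_num))
  have hLip : ∀ x y : ℝ, x ∈ Icc (-1:ℝ) 2 → y ∈ Icc (-1:ℝ) 2 → |g y - g x| ≤ L * |y - x| := by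
    intro x y hx hy
    have := (convex_Icc (-1:ℝ) 2).norm_image_sub_le_of_norm_deriv_le
      (fun z _ => hgd z) hLb hx hy
    simpa [Real.norm_eq_abs] using this
  -- negative slope of g near 0 and 1
  have hdgc : Continuous (deriv g) := hg.continuous_deriv one_le_two
  obtain ⟨δa, hδa0, hda⟩ := Metric.continuousAt_iff.mp (hdgc.continuousAt (x := 0))
    (-(deriv g 0)/2) (by linarith)
  obtain ⟨δb, hδb0, hdb⟩ := Metric.continuousAt_iff.mp (hdgc.continuousAt (x := 1))
    (-(deriv g 1)/2) (by linarith)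
  obtain ⟨β0, hβ00, hβ0a, hβ0b⟩ :
      ∃ β0 : ℝ, 0 < β0 ∧ β0 ≤ -(deriv g 0)/2 ∧ β0 ≤ -(deriv g 1)/2 :=
    ⟨min (-(deriv g 0)/2) (-(deriv g 1)/2), lt_min (by linarith) (by linarith),
      min_le_left _ _, min_le_right _ _⟩
  have hgd0 : ∀ s : ℝ, |s| ≤ δa/2 → deriv g s ≤ -β0 := by
    intro s hsle
    have h := hda (x := s) (by rw [Real.dist_eq, sub_zero]; linarith)
    rw [Real.dist_eq] at h
    have h2 := abs_lt.mp h
    linarith [h2.2]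
  have hgd1 : ∀ s : ℝ, |s - 1| ≤ δb/2 → deriv g s ≤ -β0 := by
    intro s hsle
    have h := hdb (x := s) (by rw [Real.dist_eq]; linarith)
    rw [Real.dist_eq] at h
    have h2 := abs_lt.mp h
    linarith [h2.2]
  -- the small parameter δ0
  obtain ⟨δ0, hδ00, hδ0a2, hδ0b2, hδ0q0, hδ0q1, hδ0A, hδ0A'⟩ :
      ∃ δ0 : ℝ, 0 < δ0 ∧ δ0 ≤ δa/2 ∧ δ0 ≤ δb/2 ∧ δ0 ≤ q0 ∧ δ0 ≤ q1 ∧ δ0 ≤ a ∧ δ0 ≤ 1-a := by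
    refine ⟨min (min (δa/2) (δb/2)) (min (min q0 q1) (min a (1-a))), ?_, ?_, ?_, ?_, ?_, ?_, ?_⟩
    · exact lt_min (lt_min (by linarith) (by linarith))
        (lt_min (lt_min hq00 hq10) (lt_min ha0 (by linarith)))
    · exact le_trans (min_le_left _ _) (min_le_left _ _)
    · exact le_trans (min_le_left _ _) (min_le_right _ _)
    · exact le_trans (min_le_right _ _) (le_trans (min_le_left _ _) (min_le_left _ _))
    · exact le_trans (min_le_right _ _) (le_trans (min_le_left _ _) (min_le_right _ _))
    · exact le_trans (min_le_right _ _) (le_trans (min_le_right _ _) (min_le_left _ _))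
    · exact le_trans (min_le_right _ _) (le_trans (min_le_right _ _) (min_le_right _ _))
  -- compact sign bounds
  obtain ⟨ε, hε, hub0, hub1, hlb2, hlb3⟩ :
      ∃ ε : ℝ, 0 < ε ∧ (∀ y ∈ Icc (δ0/2) ((a+q0)/2), g y ≤ -ε) ∧
        (∀ y ∈ Icc (1+δ0/4) (1+q0), g y ≤ -ε) ∧
        (∀ y ∈ Icc (-q1) (-(δ0/4)), ε ≤ g y) ∧
        (∀ y ∈ Icc (a + (1-a-q1)/2) (1-δ0/2), ε ≤ g y) := by
    obtain ⟨z0, hz0mem, hz0max⟩ := isCompact_Icc.exists_isMaxOn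
      (nonempty_Icc.mpr (by linarith : δ0/2 ≤ (a+q0)/2)) hgd.continuous.continuousOn
    have hε00 : 0 < -(g z0) := by
      have := hgneg z0 (Or.inl ⟨by linarith [hz0mem.1], by linarith [hz0mem.2]⟩)
      linarith
    obtain ⟨z1, hz1mem, hz1max⟩ := isCompact_Icc.exists_isMaxOn
      (nonempty_Icc.mpr (by linarith : (1:ℝ)+δ0/4 ≤ 1+q0)) hgd.continuous.continuousOn
    have hε10 : 0 < -(g z1) := by
      have := hgneg z1 (Or.inr (by linarith [hz1mem.1]))
      linarith
    obtain ⟨z2, hz2mem, hz2min⟩ := isCompact_Icc.exists_isMinOn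
      (nonempty_Icc.mpr (by linarith : -q1 ≤ -(δ0/4))) hgd.continuous.continuousOn
    have hε20 : 0 < g z2 := hgpos z2 (Or.inl (by linarith [hz2mem.2]))
    obtain ⟨z3, hz3mem, hz3min⟩ := isCompact_Icc.exists_isMinOn
      (nonempty_Icc.mpr (by linarith : a + (1-a-q1)/2 ≤ 1-δ0/2)) hgd.continuous.continuousOn
    have hε30 : 0 < g z3 := hgpos z3 (Or.inr ⟨by linarith [hz3mem.1], by linarith [hz3mem.2]⟩)
    refine ⟨min (min (-(g z0)) (-(g z1))) (min (g z2) (g z3)),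
      lt_min (lt_min hε00 hε10) (lt_min hε20 hε30), ?_, ?_, ?_, ?_⟩
    · intro y hy
      have h1 : g y ≤ g z0 := hz0max hy
      have h2 : min (min (-(g z0)) (-(g z1))) (min (g z2) (g z3)) ≤ -(g z0) :=
        le_trans (min_le_left _ _) (min_le_left _ _)
      linarith
    · intro y hy
      have h1 : g y ≤ g z1 := hz1max hy
      have h2 : min (min (-(g z0)) (-(g z1))) (min (g z2) (g z3)) ≤ -(g z1) :=
        le_trans (min_le_left _ _) (min_le_right _ _)
      linarith
    · intro y hy
      have h1 : g z2 ≤ g y := hz2min hy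
      have h2 : min (min (-(g z0)) (-(g z1))) (min (g z2) (g z3)) ≤ g z2 :=
        le_trans (min_le_right _ _) (min_le_left _ _)
      linarith
    · intro y hy
      have h1 : g z3 ≤ g y := hz3min hy
      have h2 : min (min (-(g z0)) (-(g z1))) (min (g z2) (g z3)) ≤ g z3 :=
        le_trans (min_le_right _ _) (min_le_right _ _)
      linarith
  -- smallness of g near 0 and 1
  obtain ⟨δc, hδc0, hct0⟩ := Metric.continuousAt_iff.mp (hgd.continuous.continuousAt (x := 0))
    (ε/2) (by linarith)
  obtain ⟨δc', hδc'0, hct1⟩ := Metric.continuousAt_iff.mp (hgd.continuous.continuousAt (x := 1))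
    (ε/2) (by linarith)
  -- the parameter δ
  obtain ⟨δ, hδpos, hδ1, hδ2, hδ3, hδ4, hδ5⟩ :
      ∃ δ : ℝ, 0 < δ ∧ δ ≤ δ0/4 ∧ δ ≤ (a-q0)/2 ∧ δ ≤ (1-a-q1)/2 ∧ δ ≤ δc/2 ∧ δ ≤ δc'/2 := by
    refine ⟨min (min (δ0/4) ((a-q0)/2)) (min ((1-a-q1)/2) (min (δc/2) (δc'/2))), ?_, ?_, ?_, ?_, ?_, ?_⟩
    · exact lt_min (lt_min (by linarith) (by linarith))
        (lt_min (by linarith) (lt_min (by linarith) (by linarith)))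
    · exact le_trans (min_le_left _ _) (min_le_left _ _)
    · exact le_trans (min_le_left _ _) (min_le_right _ _)
    · exact le_trans (min_le_right _ _) (min_le_left _ _)
    · exact le_trans (min_le_right _ _) (le_trans (min_le_right _ _) (min_le_left _ _))
    · exact le_trans (min_le_right _ _) (le_trans (min_le_right _ _) (min_le_right _ _))
  have hgsm0 : ∀ s : ℝ, 0 ≤ s → s ≤ δ → |g s| ≤ ε/2 := by
    intro s h1 h2
    have h := hct0 (x := s) (by rw [Real.dist_eq, sub_zero, abs_of_nonneg h1]; linarith)
    rw [Real.dist_eq, hg0, sub_zero] at h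
    exact h.le
  have hgsm1 : ∀ s : ℝ, 1-δ ≤ s → s ≤ 1 → |g s| ≤ ε/2 := by
    intro s h1 h2
    have h := hct1 (x := s) (by rw [Real.dist_eq, abs_lt]; constructor <;> linarith)
    rw [Real.dist_eq, hg1, sub_zero] at h
    exact h.le
  -- the constant β
  obtain ⟨β, hβpos, hββ0, hβhalf⟩ :
      ∃ β : ℝ, 0 < β ∧ β ≤ β0 ∧ ∀ r : ℝ, 0 < r → r ≤ max q0 q1 → β * r ≤ ε/2 := by
    have hqmax0 : 0 < max q0 q1 := lt_max_of_lt_left hq00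
    refine ⟨min β0 (ε/(2*max q0 q1)), lt_min hβ00 (by positivity), min_le_left _ _, ?_⟩
    intro r hr0 hrq
    have h1 : min β0 (ε/(2*max q0 q1)) * r ≤ (ε/(2*max q0 q1)) * r :=
      mul_le_mul_of_nonneg_right (min_le_right _ _) hr0.le
    have h2 : (ε/(2*max q0 q1)) * r ≤ (ε/(2*max q0 q1)) * max q0 q1 :=
      mul_le_mul_of_nonneg_left hrq (by positivity)
    have h3 : (ε/(2*max q0 q1)) * max q0 q1 = ε/2 := by
      field_simp
    linarith
  -- Claim P : decay of g-difference when adding r, near the ends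
  have claimP : ∀ s : ℝ, (s ∈ Icc (0:ℝ) δ ∨ s ∈ Icc (1-δ) 1) → ∀ r : ℝ, 0 < r → r ≤ q0 →
      β * r ≤ g s - g (s + r) := by
    intro s hs r hr0 hrq
    rcases le_or_gt r (δ0/2) with hrsmall | hrbig
    · -- MVT regime
      have hbound : ∀ z ∈ Set.Ioo s (s+r), deriv g z ≤ -β0 := by
        intro z hz
        rcases hs with hs | hs
        · refine hgd0 z (abs_le.mpr ⟨?_, ?_⟩)
          · have := hs.1; linarith [hz.1]
          · have := hs.2; linarith [hz.2, hδ1]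
        · refine hgd1 z (abs_le.mpr ⟨?_, ?_⟩)
          · have := hs.1; linarith [hz.1, hδ1]
          · have := hs.2; linarith [hz.2]
      have hmvt := aux_mvt_le g hgd (show s < s + r by linarith) hbound
      have h2 : -β0 * (s + r - s) = -β0 * r := by ring
      have h3 : β * r ≤ β0 * r := mul_le_mul_of_nonneg_right hββ0 hr0.le
      linarith
    · -- large r regime
      have hβr : β * r ≤ ε/2 := hβhalf r hr0 (le_trans hrq (le_max_left _ _))
      rcases hs with hs | hs
      · -- s near 0, s + r lands in (0, a)
        have h4 : g (s+r) ≤ -ε := hub0 (s+r) ⟨by linarith [hs.1], by linarith [hs.2, hδ2]⟩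
        have h6 := abs_le.mp (hgsm0 s hs.1 hs.2)
        linarith [h6.1]
      · -- s near 1, s + r lands in (1, ∞)
        have h4 : g (s+r) ≤ -ε := hub1 (s+r) ⟨by linarith [hs.1, hδ1], by linarith [hs.2]⟩
        have h5 : 0 ≤ g s := by
          rcases eq_or_lt_of_le hs.2 with h | h
          · rw [h, hg1]
          · have has : a < s := by linarith [hs.1, hδ3]
            exact (hgpos s (Or.inr ⟨has, h⟩)).le
        linarith
  -- Claim M : growth of g-difference when subtracting r, near the ends
  have claimM : ∀ s : ℝ, (s ∈ Icc (0:ℝ) δ ∨ s ∈ Icc (1-δ) 1) → ∀ r : ℝ, 0 < r → r ≤ q1 →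
      β * r ≤ g (s - r) - g s := by
    intro s hs r hr0 hrq
    rcases le_or_gt r (δ0/2) with hrsmall | hrbig
    · have hbound : ∀ z ∈ Set.Ioo (s-r) s, deriv g z ≤ -β0 := by
        intro z hz
        rcases hs with hs | hs
        · refine hgd0 z (abs_le.mpr ⟨?_, ?_⟩)
          · have := hs.1; linarith [hz.1]
          · have := hs.2; linarith [hz.2, hδ1]
        · refine hgd1 z (abs_le.mpr ⟨?_, ?_⟩)
          · have := hs.1; linarith [hz.1, hδ1]
          · have := hs.2; linarith [hz.2]
      have hmvt := aux_mvt_le g hgd (show s - r < s by linarith) hbound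
      have h2 : -β0 * (s - (s - r)) = -β0 * r := by ring
      have h3 : β * r ≤ β0 * r := mul_le_mul_of_nonneg_right hββ0 hr0.le
      linarith
    · have hβr : β * r ≤ ε/2 := hβhalf r hr0 (le_trans hrq (le_max_right _ _))
      rcases hs with hs | hs
      · -- s near 0, s - r lands in (-∞, 0)
        have h4 : ε ≤ g (s-r) := hlb2 (s-r) ⟨by linarith [hs.1], by linarith [hs.2, hδ1]⟩
        have h6 := abs_le.mp (hgsm0 s hs.1 hs.2)
        linarith [h6.2]
      · -- s near 1, s - r lands in (a, 1)
        have h4 : ε ≤ g (s-r) := hlb3 (s-r) ⟨by linarith [hs.1, hδ3], by linarith [hs.2]⟩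
        have h6 := abs_le.mp (hgsm1 s hs.1 hs.2)
        linarith [h6.2]
  -- middle region: positive lower bound for Φ'
  obtain ⟨A, hA⟩ := eventually_atBot.mp (hPhibot.eventually_lt_const hδpos)
  obtain ⟨B0, hB0⟩ := eventually_atTop.mp
    (hPhitop.eventually_const_lt (show 1-δ < 1 by linarith))
  obtain ⟨m, hm0, hmid⟩ : ∃ m : ℝ, 0 < m ∧ ∀ x : ℝ, δ ≤ Φ x → Φ x ≤ 1-δ → m ≤ deriv Φ x := by
    obtain ⟨zm, hzmmem, hzmmin⟩ := isCompact_Icc.exists_isMinOn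
      (nonempty_Icc.mpr (le_max_left A B0)) (hPhiC1.continuous_deriv le_rfl).continuousOn
    refine ⟨deriv Φ zm, hψpos zm, ?_⟩
    intro x h1x h2x
    refine hzmmin ⟨?_, ?_⟩
    · by_contra h
      push_neg at h
      have := hA x h.le
      linarith
    · by_contra h
      push_neg at h
      have hxB : B0 ≤ x := le_trans (le_max_right A B0) h.le
      have := hB0 x hxB
      linarith
  -- the final constants
  obtain ⟨μ, hμ0, hμβ⟩ : ∃ μ : ℝ, 0 < μ ∧ 2*μ ≤ β := ⟨β/2, by linarith, by linarith⟩
  obtain ⟨C, hC1, hCm⟩ : ∃ C : ℝ, 1 ≤ C ∧ μ + L ≤ C*(μ*m) := by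
    refine ⟨max 1 ((μ + L)/(μ*m)), le_max_left _ _, ?_⟩
    have h := le_max_right 1 ((μ + L)/(μ*m))
    rw [div_le_iff₀ (by positivity)] at h
    linarith
  have hC0 : 0 < C := lt_of_lt_of_le one_pos hC1
  refine ⟨μ, hμ0, C, hC1, ?_, ?_⟩
  · -- super-solution
    intro i j t ht
    rw [acResidual_uPlus g Φ hΦd c C q0 μ hPhieq i j t]
    set ξ := (i:ℝ) - c*t + C*q0*(1 - Real.exp (-μ*t)) with hξdef
    set E := Real.exp (-μ*t) with hEdef
    have hE0 : 0 < E := Real.exp_pos _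
    have hE1 : E ≤ 1 := by
      rw [hEdef, show (1:ℝ) = Real.exp 0 by simp]
      exact Real.exp_le_exp.mpr (by linarith [mul_nonneg hμ0.le ht])
    have hr0 : 0 < q0 * E := by positivity
    have hrq : q0 * E ≤ q0 := by
      have := mul_le_mul_of_nonneg_left hE1 (le_of_lt hq00)
      simpa using this
    set s := Φ ξ with hsdef
    have hs01 := hΦ01 ξ
    have key : 0 ≤ C*μ*(deriv Φ ξ)*(q0*E) - μ*(q0*E) + (g s - g (s + q0*E)) := by
      rcases le_or_gt s δ with hcase | hcase
      · have hP := claimP s (Or.inl ⟨hs01.1, hcase⟩) (q0*E) hr0 hrq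
        have h1 : 0 ≤ C*μ*(deriv Φ ξ)*(q0*E) :=
          mul_nonneg (mul_nonneg (mul_nonneg hC0.le hμ0.le) (hψpos ξ).le) hr0.le
        have h2 : μ*(q0*E) ≤ β*(q0*E) := mul_le_mul_of_nonneg_right (by linarith) hr0.le
        linarith
      rcases le_or_gt (1-δ) s with hcase2 | hcase2
      · have hP := claimP s (Or.inr ⟨hcase2, hs01.2⟩) (q0*E) hr0 hrq
        have h1 : 0 ≤ C*μ*(deriv Φ ξ)*(q0*E) :=
          mul_nonneg (mul_nonneg (mul_nonneg hC0.le hμ0.le) (hψpos ξ).le) hr0.le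
        have h2 : μ*(q0*E) ≤ β*(q0*E) := mul_le_mul_of_nonneg_right (by linarith) hr0.le
        linarith
      · -- middle region
        have hψm : m ≤ deriv Φ ξ := hmid ξ hcase.le hcase2.le
        have hg1' : |g (s + q0*E) - g s| ≤ L * |(s + q0*E) - s| := by
          refine hLip s (s + q0*E) ⟨by linarith [hs01.1], by linarith [hs01.2]⟩
            ⟨by linarith [hs01.1], by linarith [hs01.2, hrq, hq0a, ha1]⟩
        have habs : |(s + q0*E) - s| = q0*E := by
          rw [show (s + q0*E) - s = q0*E by ring]
          exact abs_of_pos hr0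
        rw [habs] at hg1'
        have hg2 : g (s + q0*E) - g s ≤ L * (q0*E) := le_trans (le_abs_self _) hg1'
        have h3 : (μ+L)*(q0*E) ≤ C*(μ*m)*(q0*E) := mul_le_mul_of_nonneg_right hCm hr0.le
        have h5 : C*μ*m ≤ C*μ*(deriv Φ ξ) :=
          mul_le_mul_of_nonneg_left hψm (mul_pos hC0 hμ0).le
        have h4 : C*(μ*m)*(q0*E) ≤ C*μ*(deriv Φ ξ)*(q0*E) := by
          calc C*(μ*m)*(q0*E) = C*μ*m*(q0*E) := by ring
          _ ≤ C*μ*(deriv Φ ξ)*(q0*E) := mul_le_mul_of_nonneg_right h5 hr0.le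
        linarith [h3, h4, hg2]
    calc (0:ℝ) ≤ C*μ*(deriv Φ ξ)*(q0*E) - μ*(q0*E) + (g s - g (s + q0*E)) := key
    _ = C*q0*μ*E*(deriv Φ ξ) - q0*μ*E + g s - g (s + q0*E) := by ring
  · -- sub-solution
    intro i j t ht
    rw [acResidual_uMinus g Φ hΦd c C q1 μ hPhieq i j t]
    set ξ := (i:ℝ) - c*t - C*q1*(1 - Real.exp (-μ*t)) with hξdef
    set E := Real.exp (-μ*t) with hEdef
    have hE0 : 0 < E := Real.exp_pos _
    have hE1 : E ≤ 1 := by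
      rw [hEdef, show (1:ℝ) = Real.exp 0 by simp]
      exact Real.exp_le_exp.mpr (by linarith [mul_nonneg hμ0.le ht])
    have hr0 : 0 < q1 * E := by positivity
    have hrq : q1 * E ≤ q1 := by
      have := mul_le_mul_of_nonneg_left hE1 (le_of_lt hq10)
      simpa using this
    set s := Φ ξ with hsdef
    have hs01 := hΦ01 ξ
    have key : 0 ≤ C*μ*(deriv Φ ξ)*(q1*E) - μ*(q1*E) + (g (s - q1*E) - g s) := by
      rcases le_or_gt s δ with hcase | hcase
      · have hP := claimM s (Or.inl ⟨hs01.1, hcase⟩) (q1*E) hr0 hrq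
        have h1 : 0 ≤ C*μ*(deriv Φ ξ)*(q1*E) :=
          mul_nonneg (mul_nonneg (mul_nonneg hC0.le hμ0.le) (hψpos ξ).le) hr0.le
        have h2 : μ*(q1*E) ≤ β*(q1*E) := mul_le_mul_of_nonneg_right (by linarith) hr0.le
        linarith
      rcases le_or_gt (1-δ) s with hcase2 | hcase2
      · have hP := claimM s (Or.inr ⟨hcase2, hs01.2⟩) (q1*E) hr0 hrq
        have h1 : 0 ≤ C*μ*(deriv Φ ξ)*(q1*E) :=
          mul_nonneg (mul_nonneg (mul_nonneg hC0.le hμ0.le) (hψpos ξ).le) hr0.le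
        have h2 : μ*(q1*E) ≤ β*(q1*E) := mul_le_mul_of_nonneg_right (by linarith) hr0.le
        linarith
      · have hψm : m ≤ deriv Φ ξ := hmid ξ hcase.le hcase2.le
        have hg1' : |g (s - q1*E) - g s| ≤ L * |(s - q1*E) - s| := by
          refine hLip s (s - q1*E) ⟨by linarith [hs01.1], by linarith [hs01.2]⟩
            ⟨by linarith [hs01.1, hrq, hq11, ha0], by linarith [hs01.2]⟩
        have habs : |(s - q1*E) - s| = q1*E := by
          rw [show (s - q1*E) - s = -(q1*E) by ring, abs_neg]
          exact abs_of_pos hr0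
        rw [habs] at hg1'
        have hg2 : g s - g (s - q1*E) ≤ L * (q1*E) := by
          have := (abs_le.mp hg1').1
          linarith
        have h3 : (μ+L)*(q1*E) ≤ C*(μ*m)*(q1*E) := mul_le_mul_of_nonneg_right hCm hr0.le
        have h5 : C*μ*m ≤ C*μ*(deriv Φ ξ) :=
          mul_le_mul_of_nonneg_left hψm (mul_pos hC0 hμ0).le
        have h4 : C*(μ*m)*(q1*E) ≤ C*μ*(deriv Φ ξ)*(q1*E) := by
          calc C*(μ*m)*(q1*E) = C*μ*m*(q1*E) := by ring
          _ ≤ C*μ*(deriv Φ ξ)*(q1*E) := mul_le_mul_of_nonneg_right h5 hr0.le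
        linarith [h3, h4, hg2]
    have heq : -(C*q1*μ*E*(deriv Φ ξ)) + q1*μ*E + g s - g (s - q1*E)
        = -(C*μ*(deriv Φ ξ)*(q1*E) - μ*(q1*E) + (g (s - q1*E) - g s)) := by ring
    rw [heq]
    linarith
end
end

section
/- Assume (Hg) and (H0), let u : [0,∞) → ℓ^∞(ℤ²) be a bounded C¹ solution of the discrete Allen–Cahn equation with u(0)=u⁰, and pick q₀ ∈ (0,a) such that limsup_{i→−∞} sup_{j∈ℤ} u⁰_{i,j} < q₀. Then for every t > 0 one has limsup_{i→−∞} sup_{j∈ℤ} u_{i,j}(t) < q₀. -/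
open Filter Topology MeasureTheory Set

noncomputable section

set_option maxHeartbeats 2000000 in
theorem left_tail_stays_below_q0
    (g : ℝ → ℝ) (a : ℝ) (u0 : ℤ → ℤ → ℝ) (u : ℝ → ℤ → ℤ → ℝ) (q0 : ℝ)
    -- (Hg): g is C² and bistable
    (hg : ContDiff ℝ 2 g) (ha : a ∈ Set.Ioo (0 : ℝ) 1)
    (hg0 : g 0 = 0) (hga : g a = 0) (hg1 : g 1 = 0)
    (hdg0 : deriv g 0 < 0) (hdg1 : deriv g 1 < 0)
    (hgpos : ∀ s : ℝ, s < 0 ∨ (a < s ∧ s < 1) → 0 < g s)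
    (hgneg : ∀ s : ℝ, (0 < s ∧ s < a) ∨ 1 < s → g s < 0)
    -- (H0): bounded front-like initial condition
    (hu0bdd : ∃ B : ℝ, ∀ i j : ℤ, |u0 i j| ≤ B)
    (hu0left : ∃ b : ℝ, b < a ∧ ∃ N : ℤ, ∀ i : ℤ, i ≤ N → ∀ j : ℤ, u0 i j ≤ b)
    (hu0right : ∃ b : ℝ, a < b ∧ ∃ N : ℤ, ∀ i : ℤ, N ≤ i → ∀ j : ℤ, b ≤ u0 i j)
    -- u is a bounded C¹ solution of the discrete Allen-Cahn equation with u(0) = u⁰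
    (huinit : ∀ i j : ℤ, u 0 i j = u0 i j)
    (hubdd : ∃ B : ℝ, ∀ t : ℝ, 0 ≤ t → ∀ i j : ℤ, |u t i j| ≤ B)
    (husol : ∀ i j : ℤ, ∀ t : ℝ, 0 ≤ t →
      HasDerivWithinAt (fun s => u s i j) (acRHS g (u t) i j) (Set.Ici (0 : ℝ)) t)
    (hq0 : q0 ∈ Set.Ioo 0 a)
    -- limsup_{i→−∞} sup_j u⁰_{i,j} < q₀
    (hu0q0 : ∃ b : ℝ, b < q0 ∧ ∃ N : ℤ, ∀ i : ℤ, i ≤ N → ∀ j : ℤ, u0 i j ≤ b) :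
    ∀ t : ℝ, 0 < t →
      ∃ b : ℝ, b < q0 ∧ ∃ N : ℤ, ∀ i : ℤ, i ≤ N → ∀ j : ℤ, u t i j ≤ b := by
  obtain ⟨b, hbq0, N, hbd⟩ := hu0q0
  obtain ⟨B, hB⟩ := hubdd
  obtain ⟨ha0, ha1⟩ := ha
  obtain ⟨hq0pos, hq0a⟩ := hq0
  -- basic constants
  set B₁ : ℝ := max B 1 with hB₁def
  have hB₁ : ∀ t : ℝ, 0 ≤ t → ∀ i j : ℤ, |u t i j| ≤ B₁ :=
    fun t ht i j => (hB t ht i j).trans (le_max_left _ _)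
  have hB₁1 : (1 : ℝ) ≤ B₁ := le_max_right _ _
  set b' : ℝ := (max b 0 + q0) / 2 with hb'def
  have hmb : b ≤ max b 0 := le_max_left _ _
  have hmb0 : (0:ℝ) ≤ max b 0 := le_max_right _ _
  have hmbq : max b 0 < q0 := max_lt hbq0 hq0pos
  have hb'pos : 0 < b' := by rw [hb'def]; linarith
  have hb'q0 : b' < q0 := by rw [hb'def]; linarith
  have hbb' : b < b' := by rw [hb'def]; linarith
  have hb'a : b' < a := lt_trans hb'q0 hq0a
  have hb'mem : b' ∈ Icc (-B₁) B₁ := ⟨by linarith, by linarith⟩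
  -- Lipschitz constant for g on [-B₁, B₁]
  have hgdiff : Differentiable ℝ g := hg.differentiable (by norm_num)
  have hdercont : Continuous (deriv g) := hg.continuous_deriv one_le_two
  obtain ⟨C, hC⟩ := (isCompact_Icc (a := -B₁) (b := B₁)).exists_bound_of_continuousOn
    hdercont.continuousOn
  have hC0 : 0 ≤ C := le_trans (norm_nonneg (deriv g b')) (hC b' hb'mem)
  have hLip : ∀ x ∈ Icc (-B₁) B₁, ∀ y ∈ Icc (-B₁) B₁, |g y - g x| ≤ C * |y - x| := by
    intro x hx y hy
    have := Convex.norm_image_sub_le_of_norm_deriv_le (f := g) (s := Icc (-B₁) B₁)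
      (fun z _ => hgdiff z) (fun z hz => hC z hz) (convex_Icc _ _) hx hy
    simpa [Real.norm_eq_abs] using this
  set lam : ℝ := Real.exp 1 + Real.exp (-1) - 2 with hlamdef
  have hlam : 0 < lam := by
    have h1 := Real.exp_one_gt_d9
    have h2 := Real.exp_pos (-1)
    rw [hlamdef]; nlinarith
  set c : ℝ := lam + C with hcdef
  have hc0 : 0 ≤ c := by rw [hcdef]; linarith
  set K : ℝ := (B₁ + 1 - b') * Real.exp (-((N : ℝ) + 1)) with hKdef
  have hK : 0 < K := mul_pos (by linarith) (Real.exp_pos _)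
  have hucont : ∀ i j : ℤ, ContinuousOn (fun t => u t i j) (Ici 0) :=
    fun i j t ht => (husol i j t ht).continuousWithinAt
  have hKe : ∀ i : ℤ, N + 1 ≤ i → B₁ + 1 - b' ≤ K * Real.exp (i : ℝ) := by
    intro i hi
    have h1 : (1 : ℝ) ≤ Real.exp (-((N : ℝ) + 1)) * Real.exp (i : ℝ) := by
      rw [← Real.exp_add]
      apply Real.one_le_exp
      have : ((N : ℝ) + 1) ≤ (i : ℝ) := by exact_mod_cast hi
      linarith
    calc B₁ + 1 - b' = (B₁ + 1 - b') * 1 := by ring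
      _ ≤ (B₁ + 1 - b') * (Real.exp (-((N : ℝ) + 1)) * Real.exp (i : ℝ)) := by
          apply mul_le_mul_of_nonneg_left h1 (by linarith)
      _ = K * Real.exp (i : ℝ) := by rw [hKdef]; ring
  -- main comparison lemma
  have key : ∀ η : ℝ, 0 < η → ∀ t : ℝ, 0 ≤ t → ∀ i j : ℤ,
      u t i j < b' + (K * Real.exp (i : ℝ)
        + η * (Real.exp (-(i : ℝ)) + Real.exp (j : ℝ) + Real.exp (-(j : ℝ))))
        * Real.exp (c * t) := by
    intro η hη
    set A : ℤ → ℤ → ℝ := fun i j => K * Real.exp (i : ℝ)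
      + η * (Real.exp (-(i : ℝ)) + Real.exp (j : ℝ) + Real.exp (-(j : ℝ))) with hAdef
    set W : ℝ → ℤ → ℤ → ℝ := fun t i j => b' + A i j * Real.exp (c * t) with hWdef
    have hApos : ∀ i j : ℤ, 0 < A i j := by
      intro i j
      rw [hAdef]
      have := Real.exp_pos ((i : ℝ))
      have := Real.exp_pos (-(i : ℝ))
      have := Real.exp_pos ((j : ℝ))
      have := Real.exp_pos (-(j : ℝ))
      positivity
    suffices hall : ∀ t : ℝ, 0 ≤ t → ∀ i j : ℤ, u t i j < W t i j by
      intro t ht i j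
      have := hall t ht i j
      rw [hWdef, hAdef] at this
      exact this
    by_contra hcon
    push_neg at hcon
    obtain ⟨t₀, ht₀, i₁, j₁, hW1⟩ := hcon
    have hexp1 : ∀ t : ℝ, 0 ≤ t → 1 ≤ Real.exp (c * t) :=
      fun t ht => Real.one_le_exp (mul_nonneg hc0 ht)
    -- the window of possible touching sites
    obtain ⟨M, hM⟩ := exists_int_gt (max (Real.log (B₁ / K)) (Real.log (B₁ / η)))
    have hgen : ∀ d : ℝ, 0 < d → Real.log (B₁ / d) ≤ max (Real.log (B₁ / K)) (Real.log (B₁ / η)) →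
        ∀ k : ℤ, d * Real.exp (k : ℝ) ≤ B₁ → k ≤ M := by
      intro d hd hdle k hk
      have hBd : 0 < B₁ / d := div_pos (by linarith) hd
      have h1 : Real.exp (k : ℝ) ≤ B₁ / d := (le_div_iff₀' hd).2 hk
      have h2 : (k : ℝ) ≤ Real.log (B₁ / d) := (Real.le_log_iff_exp_le hBd).2 h1
      have h3 : (k : ℝ) < (M : ℝ) := lt_of_le_of_lt (h2.trans hdle) hM
      exact_mod_cast h3.le
    have hwin : ∀ t : ℝ, 0 ≤ t → ∀ i j : ℤ, W t i j ≤ u t i j →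
        (-M ≤ i ∧ i ≤ M ∧ -M ≤ j ∧ j ≤ M) := by
      intro t ht i j h
      have hub : u t i j ≤ B₁ := (abs_le.1 (hB₁ t ht i j)).2
      have hWe : W t i j = b' + A i j * Real.exp (c * t) := by simp only [hWdef]
      have hAe : A i j * Real.exp (c * t) ≤ B₁ := by
        have := h; rw [hWe] at this; linarith
      have hA1 : A i j ≤ B₁ := by
        have h2 : A i j * 1 ≤ A i j * Real.exp (c * t) :=
          mul_le_mul_of_nonneg_left (hexp1 t ht) (hApos i j).le
        linarith [h2, hAe]
      have hterm : K * Real.exp (i : ℝ) ≤ B₁ ∧ η * Real.exp (-(i : ℝ)) ≤ B₁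
          ∧ η * Real.exp ((j : ℝ)) ≤ B₁ ∧ η * Real.exp (-(j : ℝ)) ≤ B₁ := by
        have hAe2 : K * Real.exp (i : ℝ)
            + η * (Real.exp (-(i : ℝ)) + Real.exp ((j : ℝ)) + Real.exp (-(j : ℝ))) ≤ B₁ := by
          rw [hAdef] at hA1; exact hA1
        have p1 := (mul_pos hK (Real.exp_pos ((i : ℝ)))).le
        have p2 := (mul_pos hη (Real.exp_pos (-(i : ℝ)))).le
        have p3 := (mul_pos hη (Real.exp_pos ((j : ℝ)))).le
        have p4 := (mul_pos hη (Real.exp_pos (-(j : ℝ)))).le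
        refine ⟨by nlinarith, by nlinarith, by nlinarith, by nlinarith⟩
      obtain ⟨hK1, hK2, hK3, hK4⟩ := hterm
      have hi1 : i ≤ M := hgen K hK (le_max_left _ _) i hK1
      have hi2 : -i ≤ M := by
        have := hgen η hη (le_max_right _ _) (-i) (by push_cast; exact hK2)
        exact this
      have hj1 : j ≤ M := hgen η hη (le_max_right _ _) j hK3
      have hj2 : -j ≤ M := hgen η hη (le_max_right _ _) (-j) (by push_cast; exact hK4)
      exact ⟨by omega, hi1, by omega, hj1⟩
    -- the bad set
    set F : Finset (ℤ × ℤ) := Finset.Icc (-M) M ×ˢ Finset.Icc (-M) M with hFdef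
    set S : Set ℝ := ⋃ p ∈ F, {t : ℝ | t ∈ Icc 0 t₀ ∧ W t p.1 p.2 ≤ u t p.1 p.2} with hSdef
    have hWcont : ∀ i j : ℤ, Continuous (fun t : ℝ => W t i j) := by
      intro i j
      rw [hWdef]
      exact continuous_const.add (continuous_const.mul
        (Real.continuous_exp.comp (continuous_const.mul continuous_id)))
    have hSclosed : IsClosed S := by
      rw [hSdef]
      refine Set.Finite.isClosed_biUnion (F : Set (ℤ × ℤ)).toFinite ?_
      intro p _
      have : {t : ℝ | t ∈ Icc 0 t₀ ∧ W t p.1 p.2 ≤ u t p.1 p.2}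
          = Icc 0 t₀ ∩ (fun t => u t p.1 p.2 - W t p.1 p.2) ⁻¹' (Ici 0) := by
        ext t
        simp only [mem_setOf_eq, mem_inter_iff, mem_preimage, mem_Ici, sub_nonneg]
      rw [this]
      refine ContinuousOn.preimage_isClosed_of_isClosed ?_ isClosed_Icc isClosed_Ici
      exact ((hucont p.1 p.2).mono (fun x hx => hx.1)).sub (hWcont p.1 p.2).continuousOn
    have hmemF : ∀ i j : ℤ, -M ≤ i → i ≤ M → -M ≤ j → j ≤ M → (i, j) ∈ F := by
      intro i j h1 h2 h3 h4
      rw [hFdef, Finset.mem_product]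
      exact ⟨Finset.mem_Icc.2 ⟨h1, h2⟩, Finset.mem_Icc.2 ⟨h3, h4⟩⟩
    have hmemS : ∀ t : ℝ, t ∈ Icc 0 t₀ → ∀ i j : ℤ, W t i j ≤ u t i j → t ∈ S := by
      intro t ht i j h
      obtain ⟨w1, w2, w3, w4⟩ := hwin t ht.1 i j h
      rw [hSdef]
      exact Set.mem_biUnion (hmemF i j w1 w2 w3 w4) ⟨ht, h⟩
    have hSne : S.Nonempty := ⟨t₀, hmemS t₀ ⟨ht₀, le_refl _⟩ i₁ j₁ hW1⟩
    have hSbdd : BddBelow S := by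
      refine ⟨0, fun x hx => ?_⟩
      rw [hSdef] at hx
      simp only [Set.mem_iUnion, mem_setOf_eq] at hx
      obtain ⟨p, _, hp2, _⟩ := hx
      exact hp2.1
    set τ : ℝ := sInf S with hτdef
    have hτS : τ ∈ S := hSclosed.csInf_mem hSne hSbdd
    have hτlb : ∀ t ∈ S, τ ≤ t := fun t ht => csInf_le hSbdd ht
    obtain ⟨p, hpF, hτIcc, hτW⟩ : ∃ p : ℤ × ℤ, p ∈ F ∧ τ ∈ Icc 0 t₀ ∧ W τ p.1 p.2 ≤ u τ p.1 p.2 := by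
      rw [hSdef] at hτS
      simp only [Set.mem_iUnion, mem_setOf_eq] at hτS
      obtain ⟨p, hp1, hp2, hp3⟩ := hτS
      exact ⟨p, hp1, hp2, hp3⟩
    obtain ⟨i₀, j₀⟩ := p
    simp only at hτW
    -- no touching at time 0
    have hzero : ∀ i j : ℤ, u 0 i j < W 0 i j := by
      intro i j
      have hW0 : W 0 i j = b' + A i j := by simp only [hWdef]; simp
      rw [huinit, hW0]
      rcases le_or_gt i N with h | h
      · have h1 := hbd i h j
        have h2 := hApos i j
        linarith
      · have hi : N + 1 ≤ i := h
        have h1 := hKe i hi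
        have h2 : K * Real.exp (i : ℝ) ≤ A i j := by
          simp only [hAdef]
          have := Real.exp_pos (-(i : ℝ))
          have := Real.exp_pos ((j : ℝ))
          have := Real.exp_pos (-(j : ℝ))
          nlinarith
        have h3 : u0 i j ≤ B₁ := by
          have := (abs_le.1 (hB₁ 0 (le_refl _) i j)).2
          rwa [huinit] at this
        linarith
    have hτpos : 0 < τ := by
      rcases lt_or_eq_of_le hτIcc.1 with h | h
      · exact h
      · exfalso
        rw [← h] at hτW
        exact absurd hτW (not_le.2 (hzero i₀ j₀))
    have hbefore : ∀ t : ℝ, 0 ≤ t → t < τ → ∀ i j : ℤ, u t i j < W t i j := by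
      intro t ht htτ i j
      by_contra hcon2
      push_neg at hcon2
      have htt₀ : t ≤ t₀ := le_trans htτ.le hτIcc.2
      exact absurd (hτlb t (hmemS t ⟨ht, htt₀⟩ i j hcon2)) (not_le.2 htτ)
    have hneIco : (𝓝[Ico (0:ℝ) τ] τ).NeBot := by
      rw [nhdsWithin_Ico_eq_nhdsLT hτpos]
      infer_instance
    have hle : ∀ i j : ℤ, u τ i j ≤ W τ i j := by
      intro i j
      have h1 : Tendsto (fun t => u t i j) (𝓝[Ico (0:ℝ) τ] τ) (𝓝 (u τ i j)) :=
        ((hucont i j) τ hτpos.le).mono (fun x hx => hx.1)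
      have h2 : Tendsto (fun t => W t i j) (𝓝[Ico (0:ℝ) τ] τ) (𝓝 (W τ i j)) :=
        ((hWcont i j).continuousAt).continuousWithinAt
      exact le_of_tendsto_of_tendsto h1 h2
        (eventually_of_mem self_mem_nhdsWithin fun t ht => (hbefore t ht.1 ht.2 i j).le)
    have heq : u τ i₀ j₀ = W τ i₀ j₀ := le_antisymm (hle i₀ j₀) hτW
    -- derivative of W
    have hWd : HasDerivAt (fun t => W t i₀ j₀) (A i₀ j₀ * (Real.exp (c * τ) * c)) τ := by
      have h1 : HasDerivAt (fun t : ℝ => c * t) c τ := by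
        simpa using (hasDerivAt_id τ).const_mul c
      have h2 := h1.exp
      rw [hWdef]
      exact (h2.const_mul (A i₀ j₀)).const_add b'
    set D : ℝ := acRHS g (u τ) i₀ j₀ - A i₀ j₀ * (Real.exp (c * τ) * c) with hDdef
    have hfd : HasDerivWithinAt (fun t => u t i₀ j₀ - W t i₀ j₀) D (Icc 0 τ) τ :=
      ((husol i₀ j₀ τ hτpos.le).sub hWd.hasDerivWithinAt).mono Icc_subset_Ici_self
    have hD0 : 0 ≤ D := by
      rw [hasDerivWithinAt_iff_tendsto_slope] at hfd
      rw [Icc_sdiff_right] at hfd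
      refine ge_of_tendsto hfd (eventually_of_mem self_mem_nhdsWithin ?_)
      intro t ht
      have hlt := hbefore t ht.1 ht.2 i₀ j₀
      rw [slope_def_field]
      have hnum : u t i₀ j₀ - W t i₀ j₀ - (u τ i₀ j₀ - W τ i₀ j₀) ≤ 0 := by
        rw [heq]; linarith
      have hden : t - τ < 0 := by linarith [ht.2]
      exact div_nonneg_iff.2 (Or.inr ⟨hnum, hden.le⟩)
    have hDneg : D < 0 := by
      have hub1 := hle (i₀ + 1) j₀
      have hub2 := hle (i₀ - 1) j₀
      have hub3 := hle i₀ (j₀ + 1)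
      have hub4 := hle i₀ (j₀ - 1)
      have e₁ : ∀ x : ℝ, Real.exp (x + 1) = Real.exp x * Real.exp 1 := fun x => Real.exp_add x 1
      have e₂ : ∀ x : ℝ, Real.exp (x - 1) = Real.exp x * Real.exp (-1) := by
        intro x; rw [show x - 1 = x + (-1) by ring, Real.exp_add]
      have e₃ : ∀ x : ℝ, Real.exp (-(x + 1)) = Real.exp (-x) * Real.exp (-1) := by
        intro x; rw [show -(x + 1) = -x + (-1) by ring, Real.exp_add]
      have e₄ : ∀ x : ℝ, Real.exp (-(x - 1)) = Real.exp (-x) * Real.exp 1 := by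
        intro x; rw [show -(x - 1) = -x + 1 by ring, Real.exp_add]
      have hALap : A (i₀ + 1) j₀ + A (i₀ - 1) j₀ + A i₀ (j₀ + 1) + A i₀ (j₀ - 1) - 4 * A i₀ j₀
          = lam * A i₀ j₀ := by
        rw [hAdef]
        push_cast
        rw [e₁, e₂, e₃, e₄, e₁ (j₀ : ℝ), e₂ (j₀ : ℝ), e₃ (j₀ : ℝ), e₄ (j₀ : ℝ), hlamdef]
        ring
      set E' : ℝ := A i₀ j₀ * Real.exp (c * τ) with hE'def
      have hE'pos : 0 < E' := mul_pos (hApos i₀ j₀) (Real.exp_pos _)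
      have hWcenter : W τ i₀ j₀ = b' + E' := by simp only [hWdef, hE'def]
      have humem : u τ i₀ j₀ ∈ Icc (-B₁) B₁ := abs_le.1 (hB₁ τ hτpos.le i₀ j₀)
      have hb'E : b' + E' ∈ Icc (-B₁) B₁ := by
        rw [← hWcenter, ← heq]; exact humem
      have hglip : g (b' + E') - g b' ≤ C * E' := by
        have := hLip b' hb'mem (b' + E') hb'E
        have habs : |b' + E' - b'| = E' := by
          rw [abs_of_nonneg]; ring_nf; linarith
        rw [habs] at this
        calc g (b' + E') - g b' ≤ |g (b' + E') - g b'| := le_abs_self _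
          _ ≤ C * E' := this
      have hWsum : W τ (i₀ + 1) j₀ + W τ (i₀ - 1) j₀ + W τ i₀ (j₀ + 1) + W τ i₀ (j₀ - 1)
          - 4 * W τ i₀ j₀ = lam * E' := by
        simp only [hWdef, hE'def]
        linear_combination Real.exp (c * τ) * hALap
      have hcent : u τ i₀ j₀ = b' + E' := by rw [heq, hWcenter]
      have hrhs : acRHS g (u τ) i₀ j₀ ≤ lam * E' + g b' + C * E' := by
        rw [acRHS]
        rw [hcent]
        have := hglip
        have h5 : u τ (i₀+1) j₀ + u τ (i₀-1) j₀ + u τ i₀ (j₀+1) + u τ i₀ (j₀-1)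
            ≤ W τ (i₀+1) j₀ + W τ (i₀-1) j₀ + W τ i₀ (j₀+1) + W τ i₀ (j₀-1) := by
          linarith
        have h6 : W τ i₀ j₀ = b' + E' := hWcenter
        linarith [hWsum]
      have hgb' : g b' < 0 := hgneg b' (Or.inl ⟨hb'pos, hb'a⟩)
      have hcE : A i₀ j₀ * (Real.exp (c * τ) * c) = c * E' := by rw [hE'def]; ring
      rw [hDdef, hcE, hcdef]
      have : acRHS g (u τ) i₀ j₀ - (lam + C) * E' ≤ g b' := by linarith [hrhs]
      linarith
    exact absurd hD0 (not_le.2 hDneg)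
  -- remove η
  have key2 : ∀ t : ℝ, 0 ≤ t → ∀ i j : ℤ,
      u t i j ≤ b' + K * Real.exp (i : ℝ) * Real.exp (c * t) := by
    intro t ht i j
    refine le_of_forall_pos_le_add fun ε hε => ?_
    set Q : ℝ := (Real.exp (-(i : ℝ)) + Real.exp ((j : ℝ)) + Real.exp (-(j : ℝ)))
      * Real.exp (c * t) with hQdef
    have hQpos : 0 < Q := by
      rw [hQdef]
      have := Real.exp_pos (-(i : ℝ))
      have := Real.exp_pos ((j : ℝ))
      have := Real.exp_pos (-(j : ℝ))
      have := Real.exp_pos (c * t)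
      positivity
    have h1 := key (ε / Q) (div_pos hε hQpos) t ht i j
    have h2 : (ε / Q) * Q = ε := div_mul_cancel₀ ε hQpos.ne'
    refine le_of_lt ?_
    calc u t i j < b' + (K * Real.exp (i : ℝ)
          + (ε / Q) * (Real.exp (-(i : ℝ)) + Real.exp ((j : ℝ)) + Real.exp (-(j : ℝ))))
          * Real.exp (c * t) := h1
      _ = b' + K * Real.exp (i : ℝ) * Real.exp (c * t) + (ε / Q) * Q := by rw [hQdef]; ring
      _ = b' + K * Real.exp (i : ℝ) * Real.exp (c * t) + ε := by rw [h2]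
  -- conclude
  intro t ht
  obtain ⟨N', hN'⟩ := exists_int_lt (Real.log ((q0 - b') / (2 * K * Real.exp (c * t))))
  refine ⟨(b' + q0) / 2, by linarith, N', fun i hi j => ?_⟩
  have h1 := key2 t ht.le i j
  have hexpi : Real.exp (i : ℝ) ≤ Real.exp (N' : ℝ) := Real.exp_le_exp.2 (by exact_mod_cast hi)
  have hden : 0 < (q0 - b') / (2 * K * Real.exp (c * t)) := by
    have := Real.exp_pos (c * t)
    have : 0 < 2 * K * Real.exp (c * t) := by positivity
    exact div_pos (by linarith) this
  have h2 : Real.exp (N' : ℝ) < (q0 - b') / (2 * K * Real.exp (c * t)) := by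
    rw [← Real.exp_log hden]
    exact Real.exp_lt_exp.2 hN'
  have h3 : Real.exp (N' : ℝ) * (2 * K * Real.exp (c * t)) < q0 - b' := by
    have h2K : 0 < 2 * K * Real.exp (c * t) := by positivity
    calc Real.exp (N' : ℝ) * (2 * K * Real.exp (c * t))
        < ((q0 - b') / (2 * K * Real.exp (c * t))) * (2 * K * Real.exp (c * t)) := by
          exact mul_lt_mul_of_pos_right h2 h2K
      _ = q0 - b' := div_mul_cancel₀ _ h2K.ne'
  have h4 : K * Real.exp (i : ℝ) * Real.exp (c * t) ≤ K * Real.exp (N' : ℝ) * Real.exp (c * t) :=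
    mul_le_mul_of_nonneg_right (mul_le_mul_of_nonneg_left hexpi hK.le) (Real.exp_pos (c * t)).le
  have h3' : 2 * (K * Real.exp (N' : ℝ) * Real.exp (c * t)) < q0 - b' := by
    have heqq : Real.exp (N' : ℝ) * (2 * K * Real.exp (c * t))
        = 2 * (K * Real.exp (N' : ℝ) * Real.exp (c * t)) := by ring
    linarith [h3, heqq]
  linarith [h1, h4, h3']
end
end

section
/- Assume (Hg), (HΦ) and (H0), and let u : [0,∞) → ℓ^∞(ℤ²) be a bounded C¹ solution of the discrete Allen–Cahn equation with u(0)=u⁰. Then for every q₀ > 0 there exists T > 0 such that u_{i,j}(t) ≤ 1 + q₀/2 holds for every t ≥ T and every (i,j) ∈ ℤ². -/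
open Filter Topology MeasureTheory Set

noncomputable section

set_option maxHeartbeats 1600000 in
theorem solution_eventually_below_one_plus_half_q0
    (g : ℝ → ℝ) (a c : ℝ) (Φ : ℝ → ℝ) (u0 : ℤ → ℤ → ℝ) (u : ℝ → ℤ → ℤ → ℝ)
    -- (Hg): g is C² and bistable
    (hg : ContDiff ℝ 2 g) (ha : a ∈ Set.Ioo (0 : ℝ) 1)
    (hg0 : g 0 = 0) (hga : g a = 0) (hg1 : g 1 = 0)
    (hdg0 : deriv g 0 < 0) (hdg1 : deriv g 1 < 0)
    (hgpos : ∀ s : ℝ, s < 0 ∨ (a < s ∧ s < 1) → 0 < g s)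
    (hgneg : ∀ s : ℝ, (0 < s ∧ s < a) ∨ 1 < s → g s < 0)
    -- (HΦ): horizontal travelling wave with nonzero speed
    (hc : c ≠ 0) (hPhiC1 : ContDiff ℝ 1 Φ) (hPhimono : StrictMono Φ)
    (hPhibot : Tendsto Φ atBot (nhds 0)) (hPhitop : Tendsto Φ atTop (nhds 1))
    (hPhihalf : Φ 0 = 1 / 2)
    (hPhieq : ∀ ξ : ℝ, -c * deriv Φ ξ = Φ (ξ + 1) + Φ (ξ - 1) - 2 * Φ ξ + g (Φ ξ))
    -- (H0): bounded front-like initial condition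
    (hu0bdd : ∃ B : ℝ, ∀ i j : ℤ, |u0 i j| ≤ B)
    (hu0left : ∃ b : ℝ, b < a ∧ ∃ N : ℤ, ∀ i : ℤ, i ≤ N → ∀ j : ℤ, u0 i j ≤ b)
    (hu0right : ∃ b : ℝ, a < b ∧ ∃ N : ℤ, ∀ i : ℤ, N ≤ i → ∀ j : ℤ, b ≤ u0 i j)
    -- u is a bounded C¹ solution of the discrete Allen-Cahn equation with u(0) = u⁰
    (huinit : ∀ i j : ℤ, u 0 i j = u0 i j)
    (hubdd : ∃ B : ℝ, ∀ t : ℝ, 0 ≤ t → ∀ i j : ℤ, |u t i j| ≤ B)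
    (husol : ∀ i j : ℤ, ∀ t : ℝ, 0 ≤ t →
      HasDerivWithinAt (fun s => u s i j) (acRHS g (u t) i j) (Set.Ici (0 : ℝ)) t)
    :
    ∀ q0 : ℝ, 0 < q0 → ∃ T : ℝ, 0 < T ∧ ∀ t : ℝ, T ≤ t → ∀ i j : ℤ,
      u t i j ≤ 1 + q0 / 2 := by
  intro q0 hq0
  obtain ⟨B, hB⟩ := hubdd
  have hB0 : 0 ≤ B := (abs_nonneg _).trans (hB 0 le_rfl 0 0)
  set ρ : ℝ := q0 / 4 with hρdef
  have hρ : 0 < ρ := by positivity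
  set q : ℝ := B + 1 + q0 with hqdef
  have hq : 0 < q := by positivity
  have hρq : ρ < q := by simp only [hρdef, hqdef]; linarith
  -- a negative upper bound for g on [1+ρ, 1+q]
  obtain ⟨x0, hx0mem, hx0max⟩ := (isCompact_Icc (a := 1 + ρ) (b := 1 + q)).exists_isMaxOn
    ⟨1 + ρ, le_rfl, by linarith⟩ (hg.continuous.continuousOn)
  set m : ℝ := -g x0 with hmdef
  have hm : 0 < m := by
    have : g x0 < 0 := hgneg x0 (Or.inr (by have := hx0mem.1; linarith))
    simpa [hmdef] using this
  set lam : ℝ := m / q with hlamdef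
  have hlam : 0 < lam := by positivity
  have hgle : ∀ r ∈ Icc ρ q, g (1 + r) ≤ -(lam * (r - ρ)) := by
    intro r hr
    have h1 : g (1 + r) ≤ g x0 := hx0max ⟨by linarith [hr.1], by linarith [hr.2]⟩
    have h2 : lam * (r - ρ) ≤ lam * q := by
      apply mul_le_mul_of_nonneg_left _ hlam.le
      linarith [hr.1, hr.2]
    have h3 : lam * q = m := by rw [hlamdef, div_mul_cancel₀ m hq.ne']
    have : g x0 = -m := by simp [hmdef]
    linarith
  -- the supersolution
  set v : ℝ → ℝ := fun t => 1 + ρ + (q - ρ) * Real.exp (-lam * t) with hvdef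
  set vd : ℝ → ℝ := fun t => -(lam * ((q - ρ) * Real.exp (-lam * t))) with hvddef
  have hvd : ∀ t : ℝ, HasDerivAt v (vd t) t := by
    intro t
    have h1 : HasDerivAt (fun s : ℝ => -lam * s) (-lam * 1) t := (hasDerivAt_id t).const_mul (-lam)
    have h2 := ((h1.exp).const_mul (q - ρ)).const_add (1 + ρ)
    refine h2.congr_deriv ?_
    simp only [hvddef]; ring
  have hrmem : ∀ t : ℝ, 0 ≤ t → ρ + (q - ρ) * Real.exp (-lam * t) ∈ Icc ρ q := by
    intro t ht
    have he1 : Real.exp (-lam * t) ≤ 1 := Real.exp_le_one_iff.2 (by nlinarith)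
    have he0 : 0 < Real.exp (-lam * t) := Real.exp_pos _
    constructor
    · nlinarith
    · nlinarith
  have hvsuper : ∀ t : ℝ, 0 ≤ t → g (v t) ≤ vd t := by
    intro t ht
    have := hgle _ (hrmem t ht)
    have hv1 : v t = 1 + (ρ + (q - ρ) * Real.exp (-lam * t)) := by simp only [hvdef]; ring
    rw [hv1]
    calc g (1 + (ρ + (q - ρ) * Real.exp (-lam * t)))
        ≤ -(lam * (ρ + (q - ρ) * Real.exp (-lam * t) - ρ)) := this
      _ = vd t := by simp only [hvddef]; ring
  have hvlow : ∀ t : ℝ, 0 ≤ t → 1 < v t := by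
    intro t ht
    have := (hrmem t ht).1
    simp only [hvdef]
    nlinarith
  have hvhigh : ∀ t : ℝ, 0 ≤ t → v t ≤ 1 + q := by
    intro t ht
    have := (hrmem t ht).2
    simp only [hvdef]
    nlinarith
  -- Lipschitz constant for g on a compact range
  set M2 : ℝ := B + q + 2 with hM2def
  have hgdiff : Differentiable ℝ g := hg.differentiable (by norm_num)
  obtain ⟨xK, hxKmem, hxKmax⟩ := (isCompact_Icc (a := -M2) (b := M2)).exists_isMaxOn
    ⟨0, by simp only [hM2def]; constructor <;> nlinarith⟩
    ((hg.continuous_deriv one_le_two).abs.continuousOn)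
  set K : ℝ := |deriv g xK| with hKdef
  have hK0 : 0 ≤ K := abs_nonneg _
  have hLip : ∀ x ∈ Icc (-M2) M2, ∀ y ∈ Icc (-M2) M2, |g y - g x| ≤ K * |y - x| := by
    intro x hx y hy
    have := (convex_Icc (-M2) M2).norm_image_sub_le_of_norm_deriv_le
      (f := g) (fun z _ => hgdiff.differentiableAt)
      (fun z hz => by simpa [Real.norm_eq_abs, hKdef] using hxKmax hz) hx hy
    simpa [Real.norm_eq_abs] using this
  have humem : ∀ t : ℝ, 0 ≤ t → ∀ i j : ℤ, u t i j ∈ Icc (-M2) M2 := by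
    intro t ht i j
    have := hB t ht i j
    rw [abs_le] at this
    constructor <;> simp only [hM2def] <;> nlinarith
  have hvmem : ∀ t : ℝ, 0 ≤ t → v t ∈ Icc (-M2) M2 := by
    intro t ht
    have h1 := hvlow t ht
    have h2 := hvhigh t ht
    constructor <;> simp only [hM2def] <;> nlinarith
  set γ : ℝ := 4 + K with hγdef
  have hγ0 : 0 ≤ γ := by simp only [hγdef]; linarith
  set CC : ℝ := 4 + 2 * K with hCdef
  have hCC : 0 < CC := by simp only [hCdef]; linarith
  clear_value ρ q m lam v vd M2 K γ CC
  -- the comparison principle: u t i j ≤ v t for all t ≥ 0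
  have hcomp : ∀ t : ℝ, 0 ≤ t → ∀ i j : ℤ, u t i j ≤ v t := by
    intro t0 ht0 i0 j0
    set T1 : ℝ := t0 + 1 with hT1def
    have hT1 : 0 < T1 := by linarith
    set M : ℝ := Real.exp (γ * T1) * (B + 1) with hMdef
    have hMpos : 0 < M := by positivity
    clear_value T1 M
    have hind : ∀ n : ℕ, ∀ t ∈ Icc (0:ℝ) T1, ∀ i j : ℤ,
        Real.exp (γ * t) * (u t i j - v t) ≤ M * CC ^ n * t ^ n / n.factorial := by
      intro n
      induction n with
      | zero =>
        intro t ht i j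
        simp only [pow_zero, Nat.factorial_zero, Nat.cast_one, mul_one, div_one]
        have h1 : u t i j - v t ≤ B := by
          have := (hB t ht.1 i j)
          rw [abs_le] at this
          have := hvlow t ht.1
          linarith
        have h2 : Real.exp (γ * t) * (u t i j - v t) ≤ Real.exp (γ * t) * B :=
          mul_le_mul_of_nonneg_left h1 (Real.exp_pos _).le
        have h3 : Real.exp (γ * t) ≤ Real.exp (γ * T1) :=
          Real.exp_le_exp.2 (mul_le_mul_of_nonneg_left ht.2 hγ0)
        calc Real.exp (γ * t) * (u t i j - v t) ≤ Real.exp (γ * t) * B := h2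
          _ ≤ Real.exp (γ * T1) * B := mul_le_mul_of_nonneg_right h3 hB0
          _ ≤ M := by simp only [hMdef]; nlinarith [Real.exp_pos (γ * T1)]
      | succ n IH =>
        intro t ht i j
        have hnfac : ((n.factorial : ℝ)) ≠ 0 := by
          exact_mod_cast n.factorial_ne_zero
        have hvcont : Continuous v := continuous_iff_continuousAt.2 fun s => (hvd s).continuousAt
        have hucont : ContinuousOn (fun s => u s i j) (Icc 0 T1) := fun s hs =>
          ((husol i j s hs.1).continuousWithinAt).mono Icc_subset_Ici_self
        set φ : ℝ → ℝ := fun s =>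
          Real.exp (γ * s) * (u s i j - v s)
            - M * CC ^ (n+1) * s ^ (n+1) / (((n+1).factorial : ℕ) : ℝ) with hφdef
        clear_value φ
        have hφcont : ContinuousOn φ (Icc 0 T1) := by
          rw [hφdef]
          apply ContinuousOn.sub
          · exact ((Real.continuous_exp.comp (continuous_const.mul continuous_id)).continuousOn).mul
              (hucont.sub hvcont.continuousOn)
          · exact ((continuous_const.mul (continuous_pow (n+1))).div_const
              (((n+1).factorial : ℝ))).continuousOn
        have hder : ∀ x ∈ Ioo (0:ℝ) T1, HasDerivAt φ
            (Real.exp (γ * x) * (γ * 1) * (u x i j - v x)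
              + Real.exp (γ * x) * (acRHS g (u x) i j - vd x)
              - M * CC ^ (n+1) * ((((n+1) : ℕ) : ℝ) * x ^ (n + 1 - 1)) / (((n+1).factorial : ℕ) : ℝ)) x := by
          intro x hx
          have hu' : HasDerivAt (fun s => u s i j) (acRHS g (u x) i j) x :=
            (husol i j x hx.1.le).hasDerivAt (Ici_mem_nhds hx.1)
          have h1 : HasDerivAt (fun s : ℝ => γ * s) (γ * 1) x := (hasDerivAt_id x).const_mul γ
          have hexp := h1.exp
          have h2 := hexp.mul (hu'.sub (hvd x))
          have h3 := ((hasDerivAt_pow (n+1) x).const_mul (M * CC ^ (n+1))).div_const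
            (((n+1).factorial : ℝ))
          rw [hφdef]
          exact h2.sub h3
        have hdle : ∀ x ∈ Ioo (0:ℝ) T1, deriv φ x ≤ 0 := by
          intro x hx
          rw [(hder x hx).deriv]
          have hxIcc : x ∈ Icc (0:ℝ) T1 := ⟨hx.1.le, hx.2.le⟩
          have hIH1 := IH x hxIcc (i+1) j
          have hIH2 := IH x hxIcc (i-1) j
          have hIH3 := IH x hxIcc i (j+1)
          have hIH4 := IH x hxIcc i (j-1)
          have hIH0 := IH x hxIcc i j
          set E : ℝ := Real.exp (γ * x) with hEdef
          set A : ℝ := M * CC ^ n * x ^ n / (n.factorial : ℝ) with hAdef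
          have hEpos : 0 < E := Real.exp_pos _
          have hA0 : 0 ≤ A := by
            rw [hAdef]
            exact div_nonneg (mul_nonneg (by positivity) (pow_nonneg hx.1.le n)) (by positivity)
          clear_value E A
          have hsup := hvsuper x hx.1.le
          have hlip1 : |g (u x i j) - g (v x)| ≤ K * |u x i j - v x| :=
            hLip (v x) (hvmem x hx.1.le) (u x i j) (humem x hx.1.le i j)
          have hfac : M * CC ^ (n+1) * ((((n+1) : ℕ) : ℝ) * x ^ (n + 1 - 1)) / (((n+1).factorial : ℕ) : ℝ)
              = CC * A := by
            rw [hAdef, Nat.factorial_succ, Nat.add_sub_cancel]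
            push_cast
            field_simp
            ring
          rw [hfac]
          have e1 : E * (acRHS g (u x) i j - vd x) ≤ E * (acRHS g (u x) i j - g (v x)) :=
            mul_le_mul_of_nonneg_left (by linarith) hEpos.le
          have e2 : E * (γ * 1) * (u x i j - v x) + E * (acRHS g (u x) i j - g (v x))
              = E * (u x (i+1) j - v x) + E * (u x (i-1) j - v x) + E * (u x i (j+1) - v x)
                + E * (u x i (j-1) - v x) + K * (E * (u x i j - v x))
                + E * (g (u x i j) - g (v x)) := by
            simp only [acRHS, hγdef]; ring
          have e3 : K * (E * (u x i j - v x)) + E * (g (u x i j) - g (v x)) ≤ 2 * K * A := by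
            rcases le_or_gt (u x i j - v x) 0 with hw | hw
            · have hgu : g (u x i j) - g (v x) ≤ K * -(u x i j - v x) := by
                have h := (le_abs_self (g (u x i j) - g (v x))).trans hlip1
                rwa [abs_of_nonpos hw] at h
              have h5 : E * (g (u x i j) - g (v x)) ≤ E * (K * -(u x i j - v x)) :=
                mul_le_mul_of_nonneg_left hgu hEpos.le
              have h6 : E * (K * -(u x i j - v x)) = -(K * (E * (u x i j - v x))) := by ring
              have h7 : 0 ≤ 2 * K * A := by positivity
              linarith
            · have hgu : g (u x i j) - g (v x) ≤ K * (u x i j - v x) := by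
                have h := (le_abs_self (g (u x i j) - g (v x))).trans hlip1
                rwa [abs_of_pos hw] at h
              have h5 : E * (g (u x i j) - g (v x)) ≤ E * (K * (u x i j - v x)) :=
                mul_le_mul_of_nonneg_left hgu hEpos.le
              have h6 : E * (K * (u x i j - v x)) = K * (E * (u x i j - v x)) := by ring
              have h8 : K * (E * (u x i j - v x)) ≤ K * A := mul_le_mul_of_nonneg_left hIH0 hK0
              linarith
          have e4 : CC * A = 4 * A + 2 * K * A := by rw [hCdef]; ring
          linarith
        have hanti : AntitoneOn φ (Icc 0 T1) := by
          apply antitoneOn_of_deriv_nonpos (convex_Icc 0 T1) hφcont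
          · intro x hx
            rw [interior_Icc] at hx
            exact (hder x hx).differentiableAt.differentiableWithinAt
          · intro x hx
            rw [interior_Icc] at hx
            exact hdle x hx
        have hφ0 : φ 0 ≤ 0 := by
          rw [hφdef]
          simp only [mul_zero, Real.exp_zero, one_mul, zero_pow (Nat.succ_ne_zero n), mul_zero,
            zero_div, sub_zero]
          have h1 := hB 0 le_rfl i j
          rw [abs_le] at h1
          have h2 : v 0 = 1 + q := by
            simp only [hvdef, mul_zero, Real.exp_zero]
            ring
          rw [h2, hqdef]
          linarith [h1.2]
        have hφt := hanti ⟨le_rfl, hT1.le⟩ ht ht.1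
        rw [hφdef] at hφt
        simp only [mul_zero, Real.exp_zero, one_mul, zero_pow (Nat.succ_ne_zero n), mul_zero,
          zero_div, sub_zero] at hφt
        have hφ0' : u 0 i j - v 0 ≤ 0 := by
          have h1 := hB 0 le_rfl i j
          rw [abs_le] at h1
          have h2 : v 0 = 1 + q := by
            simp only [hvdef, mul_zero, Real.exp_zero]
            ring
          rw [h2, hqdef]
          linarith [h1.2]
        push_cast
        push_cast at hφt
        linarith
    have hlim : Tendsto (fun n : ℕ => M * CC ^ n * t0 ^ n / n.factorial) atTop (nhds 0) := by
      have h1 := (FloorSemiring.tendsto_pow_div_factorial_atTop (K := ℝ) (CC * t0)).const_mul M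
      rw [mul_zero] at h1
      refine h1.congr (fun n => ?_)
      rw [mul_pow]
      ring
    have hle : Real.exp (γ * t0) * (u t0 i0 j0 - v t0) ≤ 0 := by
      refine ge_of_tendsto hlim (Eventually.of_forall (fun n => ?_))
      exact hind n t0 ⟨ht0, by linarith⟩ i0 j0
    nlinarith [Real.exp_pos (γ * t0), hle]
  -- choose the time T
  refine ⟨max 1 (Real.log ((q - ρ) / ρ) / lam), lt_of_lt_of_le one_pos (le_max_left _ _), ?_⟩
  intro t htT i j
  have ht0 : (0:ℝ) ≤ t := le_trans (by linarith [le_max_left 1 (Real.log ((q - ρ) / ρ) / lam)]) htT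
  have h1 := hcomp t ht0 i j
  have hqρ : 0 < q - ρ := by linarith
  have h2 : (q - ρ) * Real.exp (-lam * t) ≤ ρ := by
    have hlog : Real.log ((q - ρ)/ρ) / lam ≤ t := le_trans (le_max_right _ _) htT
    have h3 : Real.log ((q - ρ)/ρ) ≤ lam * t := by
      rw [div_le_iff₀ hlam] at hlog
      linarith
    have h4 : Real.exp (-lam * t) ≤ ρ / (q - ρ) := by
      calc Real.exp (-lam * t) ≤ Real.exp (-(Real.log ((q - ρ)/ρ))) :=
            Real.exp_le_exp.2 (by linarith)
        _ = (Real.exp (Real.log ((q - ρ)/ρ)))⁻¹ := Real.exp_neg _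
        _ = ((q - ρ)/ρ)⁻¹ := by rw [Real.exp_log (div_pos hqρ hρ)]
        _ = ρ / (q - ρ) := by rw [inv_div]
    have h5 := mul_le_mul_of_nonneg_left h4 hqρ.le
    have h6 : (q - ρ) * (ρ / (q - ρ)) = ρ := by field_simp
    linarith
  have h5 : v t ≤ 1 + q0 / 2 := by
    have hveq : v t = 1 + ρ + (q - ρ) * Real.exp (-lam * t) := by rw [hvdef]
    rw [hveq]
    have : ρ = q0 / 4 := hρdef
    linarith
  exact h1.trans h5
end
end

section
/- Let I_k(t) = (1/π)∫₀^π e^{t cos ω} cos(kω) dω for k ∈ ℤ and t > 0. Then there exists a constant C > 0 such that for every integer k ≥ 0 and every t > 0: I_k(t) ≤ C e^t / √t, and 0 < I_k(t) − I_{k+1}(t) ≤ C e^t / t. -/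
open Filter Topology Set intervalIntegral

noncomputable section

/-- The modified Bessel function of the first kind of integer order `k`. -/
def besselI (k : ℤ) (t : ℝ) : ℝ :=
  (1 / Real.pi) * ∫ ω in (0 : ℝ)..Real.pi, Real.exp (t * Real.cos ω) * Real.cos ((k : ℝ) * ω)

open MeasureTheory

set_option maxHeartbeats 1000000

namespace BesselAux


/-- Poisson-type coefficients. -/
def q (l : ℝ) (n : ℕ) : ℝ := l ^ n / n.factorial

lemma q_nonneg {l : ℝ} (hl : 0 ≤ l) (n : ℕ) : 0 ≤ q l n := by
  unfold q; positivity

lemma q_pos {l : ℝ} (hl : 0 < l) (n : ℕ) : 0 < q l n := by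
  unfold q; positivity

lemma summable_q (l : ℝ) : Summable (q l) := Real.summable_pow_div_factorial l

lemma q_succ (l : ℝ) (n : ℕ) : q l (n + 1) = l / (n + 1) * q l n := by
  unfold q
  rw [Nat.factorial_succ, pow_succ]
  push_cast
  field_simp

/-- core log-concavity inequality. -/
lemma core {l : ℝ} (hl : 0 ≤ l) {a b : ℕ} (h : a ≤ b) :
    q l (b + 1) * q l a ≤ q l (a + 1) * q l b := by
  rw [q_succ, q_succ]
  have h1 : l / (b + 1 : ℕ) ≤ l / (a + 1 : ℕ) := by
    apply div_le_div_of_nonneg_left hl <;> [positivity; exact_mod_cast by omega]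
  have hqa := q_nonneg hl a
  have hqb := q_nonneg hl b
  push_cast at h1
  nlinarith [mul_nonneg hqa hqb]

lemma summable_qq {l : ℝ} (hl : 0 ≤ l) (k : ℕ) : Summable (fun n => q l n * q l (n + k)) := by
  have hb : ∀ n, q l n ≤ ∑' m, q l m := fun n =>
    Summable.le_tsum (summable_q l) n (fun m _ => q_nonneg hl m)
  apply Summable.of_nonneg_of_le
    (fun n => mul_nonneg (q_nonneg hl n) (q_nonneg hl (n + k)))
    (fun n => mul_le_mul_of_nonneg_left (hb (n + k)) (q_nonneg hl n))
  exact (summable_q l).mul_right _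

/-- `P l k = ∑ q(n) q(n+k)`; equals `besselI k (2l)`. -/
def P (l : ℝ) (k : ℕ) : ℝ := ∑' n, q l n * q l (n + k)

lemma P_pos {l : ℝ} (hl : 0 < l) (k : ℕ) : 0 < P l k :=
  Summable.tsum_pos (summable_qq hl.le k) (fun n => mul_nonneg (q_nonneg hl.le n) (q_nonneg hl.le _)) 0
    (mul_pos (q_pos hl 0) (q_pos hl _))


/-- zero-padded predecessor of `q`. -/
def qp (l : ℝ) : ℕ → ℝ := fun n => match n with | 0 => 0 | m + 1 => q l m

lemma qp_nonneg {l : ℝ} (hl : 0 ≤ l) (n : ℕ) : 0 ≤ qp l n := by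
  cases n with
  | zero => simp [qp]
  | succ m => exact q_nonneg hl m

lemma summable_qp_qq {l : ℝ} (hl : 0 ≤ l) (k : ℕ) :
    Summable (fun n => qp l n * q l (n + k)) := by
  rw [← summable_nat_add_iff 1]
  have : (fun n => qp l (n + 1) * q l (n + 1 + k)) = fun n => q l n * q l (n + (k + 1)) := by
    funext n
    have : n + 1 + k = n + (k + 1) := by omega
    simp [qp, this]
  rw [this]
  exact summable_qq hl (k + 1)

lemma tsum_qp_qq {l : ℝ} (hl : 0 ≤ l) (k : ℕ) :
    ∑' n, qp l n * q l (n + k) = P l (k + 1) := by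
  rw [Summable.tsum_eq_zero_add (summable_qp_qq hl k)]
  have : (fun n => qp l (n + 1) * q l (n + 1 + k)) = fun n => q l n * q l (n + (k + 1)) := by
    funext n
    have : n + 1 + k = n + (k + 1) := by omega
    simp [qp, this]
  simp only [this]
  simp [qp, P]

set_option maxHeartbeats 1000000 in
/-- 2×2 Cauchy–Binet for infinite sums of nonnegative sequences. -/
lemma binet {x y u v : ℕ → ℝ} (hx : ∀ i, 0 ≤ x i) (hy : ∀ i, 0 ≤ y i)
    (hu : ∀ i, 0 ≤ u i) (hv : ∀ i, 0 ≤ v i)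
    (Sxu : Summable (fun i => x i * u i)) (Syv : Summable (fun i => y i * v i))
    (Sxv : Summable (fun i => x i * v i)) (Syu : Summable (fun i => y i * u i)) :
    (∑' i, x i * u i) * (∑' i, y i * v i) - (∑' i, x i * v i) * (∑' i, y i * u i)
      = ∑' p : ℕ × ℕ, (x p.1 * y p.2) * (u p.1 * v p.2 - u p.2 * v p.1) := by
  have pos : ∀ (f g : ℕ → ℝ), (∀ i, 0 ≤ f i) → (∀ i, 0 ≤ g i) → ∀ i, 0 ≤ f i * g i :=
    fun f g hf hg i => mul_nonneg (hf i) (hg i)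
  have h1 : (∑' i, x i * u i) * (∑' i, y i * v i)
      = ∑' p : ℕ × ℕ, (x p.1 * u p.1) * (y p.2 * v p.2) :=
    Summable.tsum_mul_tsum Sxu Syv (Sxu.mul_of_nonneg Syv (pos _ _ hx hu) (pos _ _ hy hv))
  have h2 : (∑' i, x i * v i) * (∑' i, y i * u i)
      = ∑' p : ℕ × ℕ, (x p.1 * v p.1) * (y p.2 * u p.2) :=
    Summable.tsum_mul_tsum Sxv Syu (Sxv.mul_of_nonneg Syu (pos _ _ hx hv) (pos _ _ hy hu))
  rw [h1, h2, ← Summable.tsum_sub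
    (Sxu.mul_of_nonneg Syv (pos _ _ hx hu) (pos _ _ hy hv))
    (Sxv.mul_of_nonneg Syu (pos _ _ hx hv) (pos _ _ hy hu))]
  congr 1
  funext p
  ring

lemma sum_swap_nonneg {G : ℕ × ℕ → ℝ} (hG : Summable G)
    (h : ∀ p : ℕ × ℕ, 0 ≤ G p + G (p.2, p.1)) : 0 ≤ ∑' p, G p := by
  have e : ∑' p : ℕ × ℕ, G (p.2, p.1) = ∑' p, G p := by
    exact ((Equiv.prodComm ℕ ℕ).tsum_eq G)
  have hG' : Summable (fun p : ℕ × ℕ => G (p.2, p.1)) :=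
    (Equiv.prodComm ℕ ℕ).summable_iff.mpr hG
  have : 0 ≤ ∑' p : ℕ × ℕ, (G p + G (p.2, p.1)) := tsum_nonneg h
  rw [Summable.tsum_add hG hG', e] at this
  linarith

/-- log-concavity of `P`. -/
lemma P_logconcave {l : ℝ} (hl : 0 ≤ l) (k : ℕ) :
    P l k * P l (k + 2) ≤ P l (k + 1) ^ 2 := by
  set x := q l with hxdef
  set y := qp l with hydef
  set u : ℕ → ℝ := fun i => q l (i + (k + 1)) with hudef
  set v : ℕ → ℝ := fun i => q l (i + k) with hvdef
  have hx : ∀ i, 0 ≤ x i := q_nonneg hl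
  have hy : ∀ i, 0 ≤ y i := qp_nonneg hl
  have hu : ∀ i, 0 ≤ u i := fun i => q_nonneg hl _
  have hv : ∀ i, 0 ≤ v i := fun i => q_nonneg hl _
  have Sxu : Summable (fun i => x i * u i) := summable_qq hl (k + 1)
  have Sxv : Summable (fun i => x i * v i) := summable_qq hl k
  have Syu : Summable (fun i => y i * u i) := summable_qp_qq hl (k + 1)
  have Syv : Summable (fun i => y i * v i) := summable_qp_qq hl k
  have e1 : (∑' i, x i * u i) = P l (k + 1) := rfl
  have e2 : (∑' i, x i * v i) = P l k := rfl
  have e3 : (∑' i, y i * u i) = P l (k + 2) := tsum_qp_qq hl (k + 1)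
  have e4 : (∑' i, y i * v i) = P l (k + 1) := tsum_qp_qq hl k
  have key := binet hx hy hu hv Sxu Syv Sxv Syu
  rw [e1, e2, e3, e4] at key
  have fact1 : ∀ i j : ℕ, i ≤ j → 0 ≤ x i * y j - x j * y i := by
    intro i j hij
    cases j with
    | zero => interval_cases i; simp [hydef, qp]
    | succ j' =>
      cases i with
      | zero =>
        simp only [hydef, qp]
        have := mul_nonneg (hx 0) (q_nonneg hl j')
        simpa using this
      | succ i' =>
        simp only [hydef, qp]
        have := core hl (show i' ≤ j' by omega)
        linarith
  have fact2 : ∀ i j : ℕ, i ≤ j → 0 ≤ u i * v j - u j * v i := by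
    intro i j hij
    have h1 : i + (k + 1) = (i + k) + 1 := by omega
    have h2 : j + (k + 1) = (j + k) + 1 := by omega
    simp only [hudef, hvdef, h1, h2]
    have := core hl (show i + k ≤ j + k by omega)
    linarith
  have termnn : ∀ p : ℕ × ℕ,
      0 ≤ (x p.1 * y p.2) * (u p.1 * v p.2 - u p.2 * v p.1)
        + (x p.2 * y p.1) * (u p.2 * v p.1 - u p.1 * v p.2) := by
    intro ⟨i, j⟩
    have expand : (x i * y j) * (u i * v j - u j * v i)
        + (x j * y i) * (u j * v i - u i * v j)
        = (x i * y j - x j * y i) * (u i * v j - u j * v i) := by ring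
    simp only [expand]
    rcases le_total i j with h | h
    · exact mul_nonneg (fact1 i j h) (fact2 i j h)
    · have := mul_nonneg (fact1 j i h) (fact2 j i h)
      nlinarith
  have SG : Summable (fun p : ℕ × ℕ => (x p.1 * y p.2) * (u p.1 * v p.2 - u p.2 * v p.1)) := by
    have expand : (fun p : ℕ × ℕ => (x p.1 * y p.2) * (u p.1 * v p.2 - u p.2 * v p.1))
        = fun p : ℕ × ℕ => (x p.1 * u p.1) * (y p.2 * v p.2) - (x p.1 * v p.1) * (y p.2 * u p.2) := by
      funext p; ring
    rw [expand]
    exact (Sxu.mul_of_nonneg Syv (fun i => mul_nonneg (hx i) (hu i))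
        (fun i => mul_nonneg (hy i) (hv i))).sub
      (Sxv.mul_of_nonneg Syu (fun i => mul_nonneg (hx i) (hv i))
        (fun i => mul_nonneg (hy i) (hu i)))
  have := sum_swap_nonneg SG termnn
  nlinarith [key, this]

/-- strict: P 1 < P 0 -/
lemma P_one_lt {l : ℝ} (hl : 0 < l) : P l 1 < P l 0 := by
  have hs0 : Summable (fun n => q l n * q l (n + 0)) := summable_qq hl.le 0
  have hs1 : Summable (fun n => q l n * q l (n + 1)) := summable_qq hl.le 1
  have hshift : Summable (fun n => q l (n + 1) * q l (n + 1)) := by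
    have := (summable_nat_add_iff 1).mpr (by simpa using hs0)
    simpa using this
  have hle : P l 1 ≤ P l 0 - q l 0 * q l 0 / 2 := by
    have tle : ∀ n, q l n * q l (n + 1)
        ≤ (q l n * q l n + q l (n + 1) * q l (n + 1)) / 2 := by
      intro n; nlinarith [sq_nonneg (q l n - q l (n + 1))]
    have hsq : Summable (fun n => q l n * q l n) := by simpa using hs0
    have h1 : P l 1 ≤ ∑' n, (q l n * q l n + q l (n + 1) * q l (n + 1)) / 2 := by
      exact Summable.tsum_le_tsum tle hs1 ((hsq.add hshift).div_const 2)
    have h2 : ∑' n, (q l n * q l n + q l (n + 1) * q l (n + 1)) / 2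
        = ((∑' n, q l n * q l n) + ∑' n, q l (n + 1) * q l (n + 1)) / 2 := by
      rw [tsum_div_const, Summable.tsum_add hsq hshift]
    have h3 : ∑' n, q l n * q l n = q l 0 * q l 0 + ∑' n, q l (n + 1) * q l (n + 1) :=
      Summable.tsum_eq_zero_add hsq
    have h4 : (∑' n, q l n * q l n) = P l 0 := by simp [P]
    rw [h2] at h1
    rw [h4] at h3
    linarith
  have : 0 < q l 0 * q l 0 / 2 := by have := q_pos hl 0; positivity
  linarith

/-- strict monotonicity of `P`. -/
lemma P_anti {l : ℝ} (hl : 0 < l) (k : ℕ) : P l (k + 1) < P l k := by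
  have ratio : ∀ m : ℕ, P l (m + 1) * P l 0 ≤ P l m * P l 1 := by
    intro m
    induction m with
    | zero => rw [mul_comm]
    | succ m ih =>
      have lc := P_logconcave hl.le m
      have p0 := P_pos hl 0
      have p1 := P_pos hl 1
      have pm := P_pos hl m
      have pm1 := P_pos hl (m + 1)
      have pm2 := P_pos hl (m + 2)
      have key : (P l (m + 2) * P l 0) * (P l m * P l (m + 1))
          ≤ (P l (m + 1) * P l 1) * (P l m * P l (m + 1)) := by
        calc (P l (m + 2) * P l 0) * (P l m * P l (m + 1))
            = (P l m * P l (m + 2)) * (P l (m + 1) * P l 0) := by ring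
          _ ≤ (P l (m + 1) ^ 2) * (P l m * P l 1) := by
              apply mul_le_mul lc ih (by positivity) (by positivity)
          _ = (P l (m + 1) * P l 1) * (P l m * P l (m + 1)) := by ring
      exact le_of_mul_le_mul_right key (by positivity)
  have h01 := P_one_lt hl
  have p0 := P_pos hl 0
  have pk := P_pos hl k
  have : P l (k + 1) * P l 0 < P l k * P l 0 :=
    lt_of_le_of_lt (ratio k) (by exact mul_lt_mul_of_pos_left h01 pk)
  exact lt_of_mul_lt_mul_right this p0.le

lemma orth (N : ℤ) : (∫ ω in Ioc (0:ℝ) Real.pi, Complex.exp (N * ω * Complex.I)).re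
    = if N = 0 then Real.pi else 0 := by
  have h0 : (0:ℝ) ≤ Real.pi := Real.pi_pos.le
  rcases eq_or_ne N 0 with rfl | hN
  · simp [Complex.exp_zero, Real.volume_Ioc, h0]
  · have h1 : (∫ ω in Ioc (0:ℝ) Real.pi, Complex.exp (N * ω * Complex.I))
        = (Complex.exp ((N*Complex.I) * Real.pi) - Complex.exp ((N*Complex.I) * 0)) / (N*Complex.I) := by
      rw [← intervalIntegral.integral_of_le h0]
      rw [show (fun ω : ℝ => Complex.exp (N * ω * Complex.I)) = fun ω : ℝ => Complex.exp ((N * Complex.I) * ω) from funext fun ω => by ring_nf]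
      exact integral_exp_mul_complex (by simp [hN, Complex.I_ne_zero])
    rw [h1]
    have hexp : Complex.exp ((N*Complex.I) * Real.pi) = ((-1 : ℂ)) ^ N := by
      rw [show (N*Complex.I) * (Real.pi:ℂ) = N * (Real.pi * Complex.I) by ring,
        Complex.exp_int_mul, Complex.exp_pi_mul_I]
    rw [hexp]
    have him : ((-1:ℂ)^N - Complex.exp ((N*Complex.I) * 0)).im = 0 := by
      rcases Int.even_or_odd N with he | ho
      · rw [he.neg_one_zpow]; simp
      · rw [Odd.neg_one_zpow ho]; simp
    have hre : (((N:ℂ))*Complex.I).re = 0 := by simp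
    rw [if_neg hN]
    rw [Complex.div_re, hre]
    set z := (-1:ℂ)^N - Complex.exp ((N*Complex.I) * 0)
    rw [him]
    simp

lemma expand (l : ℝ) (k : ℕ) (ω : ℝ) :
    (Complex.exp ((2*l) * Real.cos ω) * Complex.exp ((k:ℝ) * ω * Complex.I))
      = ∑' p : ℕ × ℕ, ((q l p.1 * q l p.2 : ℝ) : ℂ)
          * Complex.exp ((((p.1:ℤ) - (p.2:ℤ) + (k:ℤ)) : ℤ) * ω * Complex.I) := by
  have key : (2*(l:ℂ)) * (Real.cos ω : ℂ)
      = l * Complex.exp (ω * Complex.I) + l * Complex.exp (-(ω * Complex.I)) := by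
    have h1 : Complex.exp ((ω:ℂ) * Complex.I) = Real.cos ω + Real.sin ω * Complex.I := by
      rw [Complex.exp_mul_I]; simp [Complex.ofReal_cos, Complex.ofReal_sin]
    have h2 : Complex.exp (-((ω:ℂ) * Complex.I)) = Real.cos ω - Real.sin ω * Complex.I := by
      rw [show -((ω:ℂ) * Complex.I) = (-ω : ℝ) * Complex.I by push_cast; ring]
      rw [Complex.exp_mul_I]
      simp [Complex.ofReal_cos, Complex.ofReal_sin]
      ring
    rw [h1, h2]; push_cast; ring
  rw [key, Complex.exp_add]
  have hsum : ∀ z : ℂ, Complex.exp z = ∑' n : ℕ, z ^ n / n.factorial := by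
    intro z
    rw [Complex.exp_eq_exp_ℂ, NormedSpace.exp_eq_tsum_div]
  have hnorm : ∀ z : ℂ, Summable (fun n : ℕ => ‖z ^ n / (n.factorial : ℂ)‖) := by
    intro z
    have : (fun n : ℕ => ‖z ^ n / (n.factorial : ℂ)‖) = fun n => ‖z‖ ^ n / n.factorial := by
      funext n
      rw [norm_div, norm_pow]
      simp
    rw [this]
    exact Real.summable_pow_div_factorial _
  rw [hsum (l * Complex.exp (ω * Complex.I)), hsum (l * Complex.exp (-(ω * Complex.I)))]
  rw [tsum_mul_tsum_of_summable_norm (hnorm _) (hnorm _)]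
  rw [← tsum_mul_right]
  congr 1
  funext p
  have e1 : ((l:ℂ) * Complex.exp (ω * Complex.I)) ^ p.1
      = (l:ℂ)^p.1 * Complex.exp ((p.1 : ℂ) * (ω * Complex.I)) := by
    rw [mul_pow, ← Complex.exp_nat_mul]
  have e2 : ((l:ℂ) * Complex.exp (-(ω * Complex.I))) ^ p.2
      = (l:ℂ)^p.2 * Complex.exp ((p.2 : ℂ) * (-(ω * Complex.I))) := by
    rw [mul_pow, ← Complex.exp_nat_mul]
  rw [e1, e2]
  have e4 : Complex.exp ((p.1:ℂ) * ((ω:ℂ) * Complex.I)) * Complex.exp ((p.2:ℂ) * -((ω:ℂ) * Complex.I))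
      * Complex.exp (((k:ℝ):ℂ) * (ω:ℂ) * Complex.I)
      = Complex.exp ((((p.1:ℤ) - (p.2:ℤ) + (k:ℤ) : ℤ) : ℂ) * ω * Complex.I) := by
    rw [← Complex.exp_add, ← Complex.exp_add]
    congr 1
    push_cast
    ring
  have e5 : ((q l p.1 * q l p.2 : ℝ) : ℂ)
      = ((l:ℂ)^p.1 / (p.1.factorial : ℂ)) * ((l:ℂ)^p.2 / (p.2.factorial : ℂ)) := by
    unfold q
    push_cast
    ring
  rw [e5, ← e4]
  ring

lemma besselI_eq_P (k : ℕ) {t : ℝ} (ht : 0 < t) : besselI (k:ℤ) t = P (t/2) k := by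
  set l := t / 2 with hldef
  have hl : 0 < l := by positivity
  have hπ : (0:ℝ) < Real.pi := Real.pi_pos
  set N : ℕ × ℕ → ℤ := fun p => (p.1:ℤ) - (p.2:ℤ) + (k:ℤ) with hNdef
  set F : ℕ × ℕ → ℝ → ℂ := fun p ω =>
    ((q l p.1 * q l p.2 : ℝ) : ℂ) * Complex.exp ((N p) * ω * Complex.I) with hFdef
  set c : ℕ × ℕ → ℝ := fun p => q l p.1 * q l p.2 with hcdef
  have hc0 : ∀ p, 0 ≤ c p := fun p => mul_nonneg (q_nonneg hl.le _) (q_nonneg hl.le _)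
  have Sc : Summable c :=
    (summable_q l).mul_of_nonneg (summable_q l) (q_nonneg hl.le) (q_nonneg hl.le)
  -- step 1: rewrite the real integrand as the real part of a complex function
  have step1 : besselI (k:ℤ) t
      = (1 / Real.pi) * ∫ ω in Ioc (0:ℝ) Real.pi,
          (Complex.exp ((2*l) * Real.cos ω) * Complex.exp ((k:ℝ) * ω * Complex.I)).re := by
    unfold besselI
    rw [intervalIntegral.integral_of_le hπ.le]
    congr 1
    apply setIntegral_congr_fun measurableSet_Ioc
    intro ω _
    dsimp only
    have h2l : ((2:ℂ) * (l:ℂ)) * ((Real.cos ω : ℝ):ℂ) = ((t * Real.cos ω : ℝ) : ℂ) := by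
      push_cast [hldef]; ring
    rw [h2l, ← Complex.ofReal_exp]
    rw [show ((k:ℝ):ℂ) * (ω:ℂ) * Complex.I = (((k:ℝ) * ω : ℝ):ℂ) * Complex.I by push_cast; ring]
    rw [Complex.re_ofReal_mul, Complex.exp_ofReal_mul_I_re]
    push_cast
    ring
  -- step 2: measurability and domination for the series
  have hmeas : ∀ p : ℕ × ℕ, AEStronglyMeasurable (F p) (volume.restrict (Ioc 0 Real.pi)) := by
    intro p
    apply Continuous.aestronglyMeasurable
    exact continuous_const.mul (Complex.continuous_exp.comp (by fun_prop))
  have hFnorm : ∀ p ω, ‖F p ω‖ = c p := by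
    intro p ω
    have hre : ((N p : ℂ) * ω * Complex.I).re = 0 := by simp
    rw [hFdef]
    dsimp only
    rw [norm_mul, Complex.norm_real, Complex.norm_exp, hre,
      Real.exp_zero, mul_one, Real.norm_eq_abs, abs_of_nonneg (hc0 p)]
  have heval : ∀ p : ℕ × ℕ, (∫⁻ ω in Ioc (0:ℝ) Real.pi, ‖F p ω‖₊)
      = ENNReal.ofReal (c p * Real.pi) := by
    intro p
    have h1 : ∀ ω, (‖F p ω‖₊ : ENNReal) = ENNReal.ofReal (c p) := by
      intro ω
      rw [show ((‖F p ω‖₊ : ENNReal)) = ENNReal.ofReal ‖F p ω‖ from (ofReal_norm _).symm, hFnorm]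
    simp_rw [h1]
    rw [setLIntegral_const, Real.volume_Ioc, sub_zero,
      ← ENNReal.ofReal_mul (hc0 p)]
  have hdom : ∑' p : ℕ × ℕ, ∫⁻ ω in Ioc (0:ℝ) Real.pi, ‖F p ω‖₊ ≠ ⊤ := by
    simp_rw [heval]
    rw [← ENNReal.ofReal_tsum_of_nonneg (fun p => mul_nonneg (hc0 p) hπ.le) (Sc.mul_right _)]
    exact ENNReal.ofReal_ne_top
  -- step 3: swap integral and sum
  have swap : (∫ ω in Ioc (0:ℝ) Real.pi, (∑' p : ℕ × ℕ, F p ω))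
      = ∑' p : ℕ × ℕ, ∫ ω in Ioc (0:ℝ) Real.pi, F p ω :=
    integral_tsum hmeas hdom
  -- step 4: value of each integral's real part
  have hval : ∀ p : ℕ × ℕ, (∫ ω in Ioc (0:ℝ) Real.pi, F p ω).re
      = c p * (if N p = 0 then Real.pi else 0) := by
    intro p
    rw [hFdef]
    dsimp only
    rw [MeasureTheory.integral_const_mul, Complex.re_ofReal_mul, orth (N p)]
  -- step 5: summability of the family of integrals
  have hsumint : Summable (fun p : ℕ × ℕ => ∫ ω in Ioc (0:ℝ) Real.pi, F p ω) := by
    apply Summable.of_norm_bounded (Sc.mul_right Real.pi)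
    intro p
    calc ‖∫ ω in Ioc (0:ℝ) Real.pi, F p ω‖
        ≤ ∫ ω in Ioc (0:ℝ) Real.pi, ‖F p ω‖ := norm_integral_le_integral_norm _
      _ = ∫ ω in Ioc (0:ℝ) Real.pi, c p := by simp_rw [hFnorm]
      _ = c p * Real.pi := by
          rw [setIntegral_const, smul_eq_mul, Measure.real, Real.volume_Ioc, sub_zero,
            ENNReal.toReal_ofReal hπ.le, mul_comm]
  -- step 6: final evaluation of the double sum
  have final : ∑' p : ℕ × ℕ, c p * (if N p = 0 then Real.pi else 0) = P l k * Real.pi := by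
    have h1 : ∀ p : ℕ × ℕ, c p * (if N p = 0 then Real.pi else 0)
        = if p.2 = p.1 + k then q l p.1 * q l (p.1 + k) * Real.pi else 0 := by
      intro p
      rcases eq_or_ne p.2 (p.1 + k) with h | h
      · rw [if_pos h, if_pos (show N p = 0 by simp only [hNdef]; omega), hcdef]
        dsimp only
        rw [h]
      · rw [if_neg h, if_neg (show ¬ N p = 0 by simp only [hNdef]; omega), mul_zero]
    rw [tsum_congr h1]
    have h2 : ∑' p : ℕ × ℕ, (if p.2 = p.1 + k then q l p.1 * q l (p.1 + k) * Real.pi else 0)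
        = ∑' n : ℕ, q l n * q l (n + k) * Real.pi := by
      apply tsum_eq_tsum_of_ne_zero_bij (fun x => (x.1, x.1 + k))
      · intro a b hab
        have := congrArg Prod.fst hab
        exact Subtype.ext this
      · intro p hp
        simp only [Function.mem_support] at hp
        by_cases h : p.2 = p.1 + k
        · have hg : q l p.1 * q l (p.1 + k) * Real.pi ≠ 0 := by
            rw [if_pos h] at hp; exact hp
          exact ⟨⟨p.1, hg⟩, by simp [← h]⟩
        · rw [if_neg h] at hp; exact absurd rfl hp
      · intro x
        simp
    rw [h2, tsum_mul_right]
    rfl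
  -- assemble
  have hGint : IntegrableOn
      (fun ω : ℝ => Complex.exp ((2:ℂ)*(l:ℂ) * (Real.cos ω : ℂ)) * Complex.exp (((k:ℝ):ℂ) * (ω:ℂ) * Complex.I))
      (Ioc (0:ℝ) Real.pi) := by
    apply Continuous.integrableOn_Ioc
    apply Continuous.mul
    · exact Complex.continuous_exp.comp (by fun_prop)
    · exact Complex.continuous_exp.comp (by fun_prop)
  have re_comm : (∫ ω in Ioc (0:ℝ) Real.pi,
        (Complex.exp ((2:ℂ)*(l:ℂ) * (Real.cos ω : ℂ)) * Complex.exp (((k:ℝ):ℂ) * (ω:ℂ) * Complex.I)).re)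
      = (∫ ω in Ioc (0:ℝ) Real.pi,
        Complex.exp ((2:ℂ)*(l:ℂ) * (Real.cos ω : ℂ)) * Complex.exp (((k:ℝ):ℂ) * (ω:ℂ) * Complex.I)).re := by
    rw [← Complex.reCLM_apply, ← ContinuousLinearMap.integral_comp_comm _ hGint]
    rfl
  rw [step1, re_comm]
  have hGeq : (∫ ω in Ioc (0:ℝ) Real.pi,
        Complex.exp ((2:ℂ)*(l:ℂ) * (Real.cos ω : ℂ)) * Complex.exp (((k:ℝ):ℂ) * (ω:ℂ) * Complex.I))
      = ∑' p : ℕ × ℕ, ∫ ω in Ioc (0:ℝ) Real.pi, F p ω := by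
    rw [← swap]
    apply setIntegral_congr_fun measurableSet_Ioc
    intro ω _
    exact expand l k ω
  rw [hGeq]
  have : (∑' p : ℕ × ℕ, ∫ ω in Ioc (0:ℝ) Real.pi, F p ω).re
      = ∑' p : ℕ × ℕ, (∫ ω in Ioc (0:ℝ) Real.pi, F p ω).re := by
    rw [← Complex.reCLM_apply, Complex.reCLM.map_tsum hsumint]
    rfl
  rw [this, tsum_congr hval, final]
  field_simp

lemma cos_quad_bound {ω : ℝ} (h1 : 0 ≤ ω) (h2 : ω ≤ Real.pi) :
    Real.cos ω ≤ 1 - 2 * ω^2 / Real.pi^2 := by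
  have hπ := Real.pi_pos
  have hs : ω / Real.pi ≤ Real.sin (ω / 2) := by
    have := Real.mul_le_sin (x := ω / 2) (by linarith) (by linarith)
    calc ω / Real.pi = 2 / Real.pi * (ω / 2) := by field_simp
      _ ≤ Real.sin (ω / 2) := this
  have hsq : Real.sin (ω / 2) ^ 2 = 1 / 2 - Real.cos ω / 2 := by
    have := Real.sin_sq_eq_half_sub (ω / 2)
    rw [show 2 * (ω / 2) = ω by ring] at this
    exact this
  have hnn : 0 ≤ ω / Real.pi := by positivity
  have : (ω / Real.pi) ^ 2 ≤ Real.sin (ω / 2) ^ 2 := by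
    apply sq_le_sq' (by linarith) hs
  rw [hsq] at this
  rw [div_pow] at this
  have hπ2 : (0:ℝ) < Real.pi ^ 2 := by positivity
  rw [div_le_iff₀ hπ2] at this
  have h4 : 2 * ω ^ 2 / Real.pi ^ 2 ≤ 1 - Real.cos ω := by
    rw [div_le_iff₀ hπ2]
    nlinarith
  linarith

lemma exp_cos_le {t ω : ℝ} (ht : 0 < t) (h1 : 0 ≤ ω) (h2 : ω ≤ Real.pi) :
    Real.exp (t * Real.cos ω) ≤ Real.exp t * Real.exp (-(2 * t / Real.pi ^ 2 * ω ^ 2)) := by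
  rw [← Real.exp_add]
  apply Real.exp_le_exp.2
  have := cos_quad_bound h1 h2
  have h3 : t * Real.cos ω ≤ t * (1 - 2 * ω^2 / Real.pi^2) :=
    mul_le_mul_of_nonneg_left this ht.le
  calc t * Real.cos ω ≤ t * (1 - 2 * ω^2 / Real.pi^2) := h3
    _ = t + -(2 * t / Real.pi ^ 2 * ω ^ 2) := by field_simp; ring

lemma gauss_int_le {t : ℝ} (ht : 0 < t) :
    (∫ ω in (0:ℝ)..Real.pi, Real.exp (-(2 * t / Real.pi ^ 2 * ω ^ 2)))
      ≤ Real.sqrt (Real.pi / (2 * t / Real.pi ^ 2)) / 2 := by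
  have hπ := Real.pi_pos
  have ha : (0:ℝ) < 2 * t / Real.pi ^ 2 := by positivity
  set a := 2 * t / Real.pi ^ 2
  have key : (∫ ω in (0:ℝ)..Real.pi, Real.exp (-(a * ω ^ 2)))
      ≤ ∫ ω in Ioi (0:ℝ), Real.exp (-(a * ω ^ 2)) := by
    rw [intervalIntegral.integral_of_le hπ.le]
    apply setIntegral_mono_set
    · have h := (integrable_exp_neg_mul_sq ha).integrableOn (s := Ioi 0)
      simpa [neg_mul] using h
    · filter_upwards with x using (Real.exp_pos _).le
    · filter_upwards with x hx using hx.1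
  calc (∫ ω in (0:ℝ)..Real.pi, Real.exp (-(a * ω ^ 2)))
      ≤ ∫ ω in Ioi (0:ℝ), Real.exp (-(a * ω ^ 2)) := key
    _ = Real.sqrt (Real.pi / a) / 2 := by
        have := integral_gaussian_Ioi a
        simpa [neg_mul] using this

lemma besselI_le (k : ℤ) {t : ℝ} (ht : 0 < t) :
    besselI k t ≤ Real.pi * Real.exp t / Real.sqrt t := by
  have hπ := Real.pi_pos
  have ha : (0:ℝ) < 2 * t / Real.pi ^ 2 := by positivity
  have hst : 0 < Real.sqrt t := Real.sqrt_pos.2 ht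
  have step1 : besselI k t ≤ (1/Real.pi) * ∫ ω in (0:ℝ)..Real.pi,
      Real.exp t * Real.exp (-(2 * t / Real.pi^2 * ω^2)) := by
    unfold besselI
    apply mul_le_mul_of_nonneg_left _ (by positivity)
    apply intervalIntegral.integral_mono_on (μ := volume) hπ.le
    · exact Continuous.intervalIntegrable (by continuity) _ _
    · exact Continuous.intervalIntegrable (by continuity) _ _
    · intro ω hω
      calc Real.exp (t * Real.cos ω) * Real.cos ((k:ℝ)*ω)
          ≤ Real.exp (t*Real.cos ω) * 1 :=
            mul_le_mul_of_nonneg_left (Real.cos_le_one _) (Real.exp_pos _).le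
        _ = Real.exp (t * Real.cos ω) := mul_one _
        _ ≤ _ := exp_cos_le ht hω.1 hω.2
  have step2 : (∫ ω in (0:ℝ)..Real.pi, Real.exp t * Real.exp (-(2 * t / Real.pi^2 * ω^2)))
      = Real.exp t * ∫ ω in (0:ℝ)..Real.pi, Real.exp (-(2 * t / Real.pi^2 * ω^2)) :=
    intervalIntegral.integral_const_mul _ _
  have step3 := gauss_int_le ht
  have hsqrt : Real.sqrt (Real.pi / (2 * t / Real.pi ^ 2))
      = Real.sqrt (Real.pi^3/2) / Real.sqrt t := by
    rw [show Real.pi / (2 * t / Real.pi ^ 2) = (Real.pi^3/2) / t by field_simp]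
    rw [Real.sqrt_div (by positivity)]
  have hbig : Real.sqrt (Real.pi^3/2) ≤ 2 * Real.pi^2 := by
    have h1 : Real.pi^3/2 ≤ (2*Real.pi^2)^2 := by nlinarith [Real.pi_gt_three]
    calc Real.sqrt (Real.pi^3/2) ≤ Real.sqrt ((2*Real.pi^2)^2) := Real.sqrt_le_sqrt h1
      _ = 2*Real.pi^2 := Real.sqrt_sq (by positivity)
  calc besselI k t ≤ (1/Real.pi) * ∫ ω in (0:ℝ)..Real.pi,
        Real.exp t * Real.exp (-(2 * t / Real.pi^2 * ω^2)) := step1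
    _ ≤ (1/Real.pi) * (Real.exp t * (Real.sqrt (Real.pi / (2 * t / Real.pi ^ 2)) / 2)) := by
        rw [step2]
        apply mul_le_mul_of_nonneg_left _ (by positivity)
        exact mul_le_mul_of_nonneg_left step3 (Real.exp_pos _).le
    _ = (Real.sqrt (Real.pi^3/2) / (2*Real.pi)) * (Real.exp t / Real.sqrt t) := by
        rw [hsqrt]; field_simp
    _ ≤ Real.pi * (Real.exp t / Real.sqrt t) := by
        apply mul_le_mul_of_nonneg_right _ (by positivity)
        rw [div_le_iff₀ (by positivity)]
        nlinarith
    _ = Real.pi * Real.exp t / Real.sqrt t := by ring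

lemma besselI_diff_le (k : ℤ) {t : ℝ} (ht : 0 < t) :
    besselI k t - besselI (k+1) t ≤ Real.pi * Real.exp t / t := by
  have hπ := Real.pi_pos
  have ha : (0:ℝ) < 2 * t / Real.pi ^ 2 := by positivity
  set a := 2 * t / Real.pi ^ 2 with hadef
  have hcont1 : Continuous fun ω : ℝ => Real.exp (t * Real.cos ω) * Real.cos ((k:ℝ)*ω) := by
    continuity
  have hcont2 : Continuous fun ω : ℝ => Real.exp (t * Real.cos ω) * Real.cos (((k+1:ℤ):ℝ)*ω) := by
    continuity
  have step1 : besselI k t - besselI (k+1) t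
      = (1/Real.pi) * ∫ ω in (0:ℝ)..Real.pi,
        (Real.exp (t * Real.cos ω) * Real.cos ((k:ℝ)*ω)
          - Real.exp (t * Real.cos ω) * Real.cos (((k+1:ℤ):ℝ)*ω)) := by
    unfold besselI
    rw [← mul_sub, ← intervalIntegral.integral_sub
      (hcont1.intervalIntegrable _ _) (hcont2.intervalIntegrable _ _)]
  have pointwise : ∀ ω ∈ Icc (0:ℝ) Real.pi,
      Real.exp (t * Real.cos ω) * Real.cos ((k:ℝ)*ω)
        - Real.exp (t * Real.cos ω) * Real.cos (((k+1:ℤ):ℝ)*ω)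
      ≤ Real.exp t * (ω * Real.exp (-(a * ω^2))) := by
    intro ω hω
    have hω1 := hω.1
    have hω2 := hω.2
    have hcos : Real.cos ((k:ℝ)*ω) - Real.cos (((k+1:ℤ):ℝ)*ω) ≤ ω := by
      rw [Real.cos_sub_cos]
      have hs1 : Real.sin (((k:ℝ)*ω - ((k+1:ℤ):ℝ)*ω)/2) = -Real.sin (ω/2) := by
        rw [show ((k:ℝ)*ω - ((k+1:ℤ):ℝ)*ω)/2 = -(ω/2) by push_cast; ring, Real.sin_neg]
      rw [hs1]
      have hsin_nn : 0 ≤ Real.sin (ω/2) :=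
        Real.sin_nonneg_of_nonneg_of_le_pi (by linarith) (by linarith)
      have hsin_le : Real.sin (ω/2) ≤ ω/2 := Real.sin_le (by linarith)
      have hsin1 : Real.sin (((k:ℝ)*ω + ((k+1:ℤ):ℝ)*ω)/2) ≤ 1 := Real.sin_le_one _
      nlinarith
    have hexp := exp_cos_le ht hω1 hω2
    calc Real.exp (t * Real.cos ω) * Real.cos ((k:ℝ)*ω)
          - Real.exp (t * Real.cos ω) * Real.cos (((k+1:ℤ):ℝ)*ω)
        = Real.exp (t * Real.cos ω) * (Real.cos ((k:ℝ)*ω) - Real.cos (((k+1:ℤ):ℝ)*ω)) := by ring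
      _ ≤ Real.exp (t * Real.cos ω) * ω := by
          apply mul_le_mul_of_nonneg_left hcos (Real.exp_pos _).le
      _ ≤ (Real.exp t * Real.exp (-(a*ω^2))) * ω := by
          apply mul_le_mul_of_nonneg_right hexp hω1
      _ = Real.exp t * (ω * Real.exp (-(a * ω^2))) := by ring
  have ftc : (∫ ω in (0:ℝ)..Real.pi, ω * Real.exp (-(a * ω^2)))
      = -Real.exp (-(a*Real.pi^2))/(2*a) - (-Real.exp (-(a*0^2))/(2*a)) := by
    apply intervalIntegral.integral_eq_sub_of_hasDerivAt
      (f := fun ω => -Real.exp (-(a*ω^2))/(2*a))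
    · intro x _
      have h1 : HasDerivAt (fun ω:ℝ => -(a*ω^2)) (-(a*(2*x))) x := by
        exact (((hasDerivAt_pow 2 x).const_mul a).neg).congr_deriv (by norm_num)
      have h3 := (h1.exp.div_const (2*a)).neg
      have hfun : (fun ω => -Real.exp (-(a*ω^2))/(2*a))
          = fun x : ℝ => -(Real.exp (-(a*x^2))/(2*a)) := by
        funext x; ring
      rw [hfun]
      exact h3.congr_deriv (by field_simp)
    · exact Continuous.intervalIntegrable (by continuity) _ _
  have gauss2 : (∫ ω in (0:ℝ)..Real.pi, ω * Real.exp (-(a * ω^2))) ≤ 1/(2*a) := by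
    rw [ftc]
    have e1 : (0:ℝ) < Real.exp (-(a*Real.pi^2)) := Real.exp_pos _
    have e2 : Real.exp (-(a*0^2)) = 1 := by norm_num
    rw [e2]
    have h3 : -Real.exp (-(a*Real.pi^2))/(2*a) - -1/(2*a)
        = (1 - Real.exp (-(a*Real.pi^2)))/(2*a) := by ring
    rw [h3]
    gcongr
    linarith
  calc besselI k t - besselI (k+1) t
      = (1/Real.pi) * ∫ ω in (0:ℝ)..Real.pi,
        (Real.exp (t * Real.cos ω) * Real.cos ((k:ℝ)*ω)
          - Real.exp (t * Real.cos ω) * Real.cos (((k+1:ℤ):ℝ)*ω)) := step1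
    _ ≤ (1/Real.pi) * ∫ ω in (0:ℝ)..Real.pi, Real.exp t * (ω * Real.exp (-(a * ω^2))) := by
        apply mul_le_mul_of_nonneg_left _ (by positivity)
        apply intervalIntegral.integral_mono_on hπ.le
        · exact ((hcont1.sub hcont2).intervalIntegrable _ _)
        · exact Continuous.intervalIntegrable (by continuity) _ _
        · exact pointwise
    _ = (1/Real.pi) * (Real.exp t * ∫ ω in (0:ℝ)..Real.pi, ω * Real.exp (-(a * ω^2))) := by
        rw [intervalIntegral.integral_const_mul]
    _ ≤ (1/Real.pi) * (Real.exp t * (1/(2*a))) := by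
        apply mul_le_mul_of_nonneg_left _ (by positivity)
        exact mul_le_mul_of_nonneg_left gauss2 (Real.exp_pos _).le
    _ = (Real.pi/4) * (Real.exp t / t) := by
        rw [hadef]
        field_simp
        ring
    _ ≤ Real.pi * (Real.exp t / t) := by
        apply mul_le_mul_of_nonneg_right (by linarith) (by positivity)
    _ = Real.pi * Real.exp t / t := by ring

end BesselAux

theorem besselI_bounds :
    ∃ C : ℝ, 0 < C ∧ ∀ k : ℤ, 0 ≤ k → ∀ t : ℝ, 0 < t →
      besselI k t ≤ C * Real.exp t / Real.sqrt t ∧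
      0 < besselI k t - besselI (k + 1) t ∧
      besselI k t - besselI (k + 1) t ≤ C * Real.exp t / t := by
  refine ⟨Real.pi, Real.pi_pos, ?_⟩
  intro k hk t ht
  obtain ⟨n, rfl⟩ : ∃ n : ℕ, k = (n : ℤ) := ⟨k.toNat, (Int.toNat_of_nonneg hk).symm⟩
  have hl : 0 < t / 2 := by linarith
  have hb1 := BesselAux.besselI_eq_P n ht
  have hb2 : besselI ((n:ℤ) + 1) t = BesselAux.P (t/2) (n+1) := by
    have h := BesselAux.besselI_eq_P (n+1) ht
    rw [show (((n+1:ℕ)):ℤ) = (n:ℤ)+1 by push_cast; ring] at h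
    exact h
  refine ⟨BesselAux.besselI_le _ ht, ?_, BesselAux.besselI_diff_le _ ht⟩
  rw [hb1, hb2]
  have := BesselAux.P_anti hl n
  linarith
end
end

section
/- Fix c, d ∈ ℝ. Then there exists δ > 0 such that for any pair of C¹ functions Γ⁻, Γ⁺ : [0,∞) → ℓ^∞(ℤ) satisfying: (a) Γ⁻ is a sub-solution of the discrete mean curvature flow; (b) Γ⁺ is a super-solution of the discrete mean curvature flow; (c) ‖∂⁺Γ⁻(t)‖_{ℓ^∞} ≤ δ and ‖∂⁺Γ⁺(t)‖_{ℓ^∞} ≤ δ for every t ≥ 0; (d) Γ⁻_j(0) ≤ Γ⁺_j(0) for every j ∈ ℤ; one has Γ⁻_j(t) ≤ Γ⁺_j(t) for every j ∈ ℤ and every t ≥ 0. -/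
open Filter Topology Set

set_option maxHeartbeats 1000000

noncomputable section

/-- Right-hand side of the discrete mean curvature flow
`Γ̇_j = (∂⁽²⁾Γ)_j / (β_Γ)_j² + 2 d (β_Γ)_j + c − 2 d`. -/
def mcfRHS (c d : ℝ) (Γ : ℤ → ℝ) (j : ℤ) : ℝ :=
  (Γ (j + 1) - 2 * Γ j + Γ (j - 1)) /
      (1 + ((Γ (j + 1) - Γ j) ^ 2 + (Γ j - Γ (j - 1)) ^ 2) / 2)
    + 2 * d * Real.sqrt (1 + ((Γ (j + 1) - Γ j) ^ 2 + (Γ j - Γ (j - 1)) ^ 2) / 2)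
    + c - 2 * d

noncomputable def Gfun (d p q : ℝ) : ℝ :=
  (p - q) / (1 + (p ^ 2 + q ^ 2) / 2) + 2 * d * Real.sqrt (1 + (p ^ 2 + q ^ 2) / 2)

lemma Gaux (d p P q s1 s2 : ℝ)
    (hp1 : -(1/4 : ℝ) ≤ p) (hp2 : p ≤ 1/4) (hP1 : -(1/4 : ℝ) ≤ P) (hP2 : P ≤ 1/4)
    (hq1 : -(1/4 : ℝ) ≤ q) (hq2 : q ≤ 1/4)
    (hdp1 : -(1/4 : ℝ) ≤ d * p) (hdp2 : d * p ≤ 1/4)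
    (hdP1 : -(1/4 : ℝ) ≤ d * P) (hdP2 : d * P ≤ 1/4)
    (hs1ge : 1 ≤ s1) (hs2ge : 1 ≤ s2) (hs1le : s1 ^ 2 ≤ 17/16) (hs2le : s2 ^ 2 ≤ 17/16) :
    2 ≤ s1 ^ 2 * s2 ^ 2 * (s1 + s2) ∧
    0 ≤ (s1 + s2) * (s1 ^ 2 - (p - q) * (P + p) / 2) + d * (P + p) * (s1 ^ 2 * s2 ^ 2) ∧
    (s1 + s2) * (s1 ^ 2 - (p - q) * (P + p) / 2) + d * (P + p) * (s1 ^ 2 * s2 ^ 2) ≤ 6 := by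
  have hs1le' : s1 ≤ 17/16 := by nlinarith [sq_nonneg (s1 - 1)]
  have hs2le' : s2 ≤ 17/16 := by nlinarith [sq_nonneg (s2 - 1)]
  have hB1 : 1 ≤ s1 ^ 2 * s2 ^ 2 := by
    nlinarith [mul_nonneg (by nlinarith : (0:ℝ) ≤ s1 ^ 2 - 1) (by nlinarith : (0:ℝ) ≤ s2 ^ 2 - 1)]
  have hB2 : s1 ^ 2 * s2 ^ 2 ≤ 289/256 := by
    nlinarith [mul_le_mul hs1le hs2le (sq_nonneg s2) (by norm_num : (0:ℝ) ≤ 17/16)]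
  have hM2 : 2 ≤ s1 ^ 2 * s2 ^ 2 * (s1 + s2) := by
    nlinarith [mul_nonneg (mul_nonneg (by positivity : (0:ℝ) ≤ s1 ^ 2 * s2 ^ 2) (by linarith : (0:ℝ) ≤ s1 + s2 - 2)) (by norm_num : (0:ℝ) ≤ (1:ℝ))]
  have hx1 : (p - q) * (P + p) / 2 ≤ 1/8 := by nlinarith
  have hx2 : -(1/8 : ℝ) ≤ (p - q) * (P + p) / 2 := by nlinarith
  have hT1 : 7/8 ≤ s1 ^ 2 - (p - q) * (P + p) / 2 := by nlinarith
  have hT2 : s1 ^ 2 - (p - q) * (P + p) / 2 ≤ 19/16 := by linarith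
  have hy1 : -(1/2 : ℝ) ≤ d * (P + p) := by nlinarith
  have hy2 : d * (P + p) ≤ 1/2 := by nlinarith
  refine ⟨hM2, ?_, ?_⟩
  · nlinarith [mul_nonneg (by linarith : (0:ℝ) ≤ s1 + s2 - 2) (by linarith : (0:ℝ) ≤ s1 ^ 2 - (p - q) * (P + p) / 2 - 7/8),
      mul_nonneg (by linarith : (0:ℝ) ≤ d * (P + p) + 1/2) (by positivity : (0:ℝ) ≤ s1 ^ 2 * s2 ^ 2)]
  · nlinarith [mul_nonneg (by linarith : (0:ℝ) ≤ 34/16 - (s1 + s2)) (by linarith : (0:ℝ) ≤ s1 ^ 2 - (p - q) * (P + p) / 2),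
      mul_nonneg (by linarith : (0:ℝ) ≤ 1/2 - d * (P + p)) (by positivity : (0:ℝ) ≤ s1 ^ 2 * s2 ^ 2)]

lemma Gmono (d p P q : ℝ) (hp : |p| ≤ 1/4) (hP : |P| ≤ 1/4) (hq : |q| ≤ 1/4)
    (hdp : |d| * |p| ≤ 1/4) (hdP : |d| * |P| ≤ 1/4) (hpP : p ≤ P) :
    0 ≤ Gfun d P q - Gfun d p q ∧ Gfun d P q - Gfun d p q ≤ 3 * (P - p) := by
  obtain ⟨hp1, hp2⟩ := abs_le.1 hp
  obtain ⟨hP1, hP2⟩ := abs_le.1 hP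
  obtain ⟨hq1, hq2⟩ := abs_le.1 hq
  have hdp1 : -(1/4 : ℝ) ≤ d * p := by nlinarith [neg_abs_le (d*p), abs_mul d p]
  have hdp2 : d * p ≤ 1/4 := by nlinarith [le_abs_self (d*p), abs_mul d p]
  have hdP1 : -(1/4 : ℝ) ≤ d * P := by nlinarith [neg_abs_le (d*P), abs_mul d P]
  have hdP2 : d * P ≤ 1/4 := by nlinarith [le_abs_self (d*P), abs_mul d P]
  clear hp hP hq hdp hdP
  set s1 := Real.sqrt (1 + (p ^ 2 + q ^ 2) / 2) with hs1
  set s2 := Real.sqrt (1 + (P ^ 2 + q ^ 2) / 2) with hs2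
  have hD1 : (0:ℝ) ≤ 1 + (p ^ 2 + q ^ 2) / 2 := by positivity
  have hD2 : (0:ℝ) ≤ 1 + (P ^ 2 + q ^ 2) / 2 := by positivity
  have hs1sq : s1 ^ 2 = 1 + (p ^ 2 + q ^ 2) / 2 := Real.sq_sqrt hD1
  have hs2sq : s2 ^ 2 = 1 + (P ^ 2 + q ^ 2) / 2 := Real.sq_sqrt hD2
  have hs1nn : 0 ≤ s1 := Real.sqrt_nonneg _
  have hs2nn : 0 ≤ s2 := Real.sqrt_nonneg _
  have hEeq : Gfun d P q - Gfun d p q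
      = (P - q) / s2 ^ 2 + 2 * d * s2 - ((p - q) / s1 ^ 2 + 2 * d * s1) := by
    unfold Gfun
    rw [← hs1, ← hs2, hs1sq, hs2sq]
  clear_value s1 s2
  clear hs1 hs2
  have hs1ge : 1 ≤ s1 := by nlinarith
  have hs2ge : 1 ≤ s2 := by nlinarith
  have hs1le : s1 ^ 2 ≤ 17/16 := by nlinarith
  have hs2le : s2 ^ 2 ≤ 17/16 := by nlinarith
  have hrel : s2 ^ 2 - s1 ^ 2 = (P ^ 2 - p ^ 2) / 2 := by rw [hs1sq, hs2sq]; ring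
  have hs1z : s1 ≠ 0 := by positivity
  have hs2z : s2 ≠ 0 := by positivity
  have key : (Gfun d P q - Gfun d p q) * (s1 ^ 2 * s2 ^ 2 * (s1 + s2))
      = (P - p) * ((s1 + s2) * (s1 ^ 2 - (p - q) * (P + p) / 2)
        + d * (P + p) * (s1 ^ 2 * s2 ^ 2)) := by
    rw [hEeq]
    have e1 : s1 ^ 2 ≠ 0 := pow_ne_zero _ hs1z
    have e2 : s2 ^ 2 ≠ 0 := pow_ne_zero _ hs2z
    rw [div_add' _ _ _ e2, div_add' _ _ _ e1, div_sub_div _ _ e2 e1, div_mul_eq_mul_div,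
      div_eq_iff (mul_ne_zero e2 e1)]
    linear_combination ((2 * d * s1 ^ 2 * s2 ^ 2 - (s1 + s2) * (p - q)) * (s1 ^ 2 * s2 ^ 2)) * hrel
  obtain ⟨hM2, hAlow, hAhigh⟩ :=
    Gaux d p P q s1 s2 hp1 hp2 hP1 hP2 hq1 hq2 hdp1 hdp2 hdP1 hdP2 hs1ge hs2ge hs1le hs2le
  have hMpos : (0:ℝ) < s1 ^ 2 * s2 ^ 2 * (s1 + s2) := by linarith
  have hXnn : 0 ≤ (P - p) * ((s1 + s2) * (s1 ^ 2 - (p - q) * (P + p) / 2)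
      + d * (P + p) * (s1 ^ 2 * s2 ^ 2)) := mul_nonneg (by linarith) hAlow
  have hEval : Gfun d P q - Gfun d p q
      = (P - p) * ((s1 + s2) * (s1 ^ 2 - (p - q) * (P + p) / 2)
        + d * (P + p) * (s1 ^ 2 * s2 ^ 2)) / (s1 ^ 2 * s2 ^ 2 * (s1 + s2)) := by
    rw [eq_div_iff (ne_of_gt hMpos)]
    exact key
  constructor
  · rw [hEval]
    exact div_nonneg hXnn hMpos.le
  · rw [hEval]
    have h3 := div_le_div_of_nonneg_left hXnn (by norm_num : (0:ℝ) < 2) hM2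
    have h4 : (P - p) * ((s1 + s2) * (s1 ^ 2 - (p - q) * (P + p) / 2)
        + d * (P + p) * (s1 ^ 2 * s2 ^ 2)) ≤ (P - p) * 6 :=
      mul_le_mul_of_nonneg_left hAhigh (by linarith)
    linarith

lemma Gswap (d p q : ℝ) : Gfun d p q = Gfun d (-q) (-p) := by
  unfold Gfun
  rw [show 1 + ((-q) ^ 2 + (-p) ^ 2) / 2 = 1 + (p ^ 2 + q ^ 2) / 2 by ring]
  ring

lemma Gdiff_le (d p q P Q : ℝ)
    (hp : |p| ≤ 1/4) (hq : |q| ≤ 1/4) (hP : |P| ≤ 1/4) (hQ : |Q| ≤ 1/4)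
    (hdp : |d| * |p| ≤ 1/4) (hdq : |d| * |q| ≤ 1/4)
    (hdP : |d| * |P| ≤ 1/4) (hdQ : |d| * |Q| ≤ 1/4) :
    Gfun d P Q - Gfun d p q ≤ 3 * max (P - p) 0 + 3 * max (q - Q) 0 := by
  have h1 : Gfun d P Q - Gfun d p Q ≤ 3 * max (P - p) 0 := by
    rcases le_total p P with h | h
    · exact le_trans (Gmono d p P Q hp hP hQ hdp hdP h).2
        (by have := le_max_left (P - p) (0:ℝ); nlinarith)
    · have h0 := (Gmono d P p Q hP hp hQ hdP hdp h).1
      have : (0:ℝ) ≤ 3 * max (P - p) 0 := by positivity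
      linarith
  have h2 : Gfun d p Q - Gfun d p q ≤ 3 * max (q - Q) 0 := by
    rw [Gswap d p Q, Gswap d p q]
    have hq' : |(-q : ℝ)| ≤ 1/4 := by rwa [abs_neg]
    have hQ' : |(-Q : ℝ)| ≤ 1/4 := by rwa [abs_neg]
    have hp' : |(-p : ℝ)| ≤ 1/4 := by rwa [abs_neg]
    have hdq' : |d| * |(-q : ℝ)| ≤ 1/4 := by rwa [abs_neg]
    have hdQ' : |d| * |(-Q : ℝ)| ≤ 1/4 := by rwa [abs_neg]
    rcases le_total Q q with h | h
    · have h0 := (Gmono d (-q) (-Q) (-p) hq' hQ' hp' hdq' hdQ' (by linarith)).2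
      have : q - Q ≤ max (q - Q) 0 := le_max_left _ _
      nlinarith
    · have h0 := (Gmono d (-Q) (-q) (-p) hQ' hq' hp' hdQ' hdq' (by linarith)).1
      have : (0:ℝ) ≤ 3 * max (q - Q) 0 := by positivity
      linarith
  linarith

lemma mcf_eq (c d : ℝ) (Γ : ℤ → ℝ) (j : ℤ) :
    mcfRHS c d Γ j = Gfun d (Γ (j+1) - Γ j) (Γ j - Γ (j-1)) + c - 2*d := by
  unfold mcfRHS Gfun
  ring

theorem discrete_mean_curvature_comparison (c d : ℝ) :
    ∃ δ : ℝ, 0 < δ ∧ ∀ Γm Γp : ℝ → ℤ → ℝ,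
      -- Γ⁻ and Γ⁺ take values in ℓ^∞(ℤ)
      (∃ B : ℝ, ∀ t : ℝ, 0 ≤ t → ∀ j : ℤ, |Γm t j| ≤ B) →
      (∃ B : ℝ, ∀ t : ℝ, 0 ≤ t → ∀ j : ℤ, |Γp t j| ≤ B) →
      -- (a): Γ⁻ is a C¹ sub-solution
      (∀ j : ℤ, ∀ t : ℝ, 0 ≤ t → ∃ D : ℝ,
        HasDerivWithinAt (fun s => Γm s j) D (Set.Ici (0 : ℝ)) t ∧ D ≤ mcfRHS c d (Γm t) j) →
      -- (b): Γ⁺ is a C¹ super-solution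
      (∀ j : ℤ, ∀ t : ℝ, 0 ≤ t → ∃ D : ℝ,
        HasDerivWithinAt (fun s => Γp s j) D (Set.Ici (0 : ℝ)) t ∧ mcfRHS c d (Γp t) j ≤ D) →
      -- (c): uniform gradient bounds
      (∀ t : ℝ, 0 ≤ t → ∀ j : ℤ, |Γm t (j + 1) - Γm t j| ≤ δ) →
      (∀ t : ℝ, 0 ≤ t → ∀ j : ℤ, |Γp t (j + 1) - Γp t j| ≤ δ) →
      -- (d): ordered initial data
      (∀ j : ℤ, Γm 0 j ≤ Γp 0 j) →
      ∀ t : ℝ, 0 ≤ t → ∀ j : ℤ, Γm t j ≤ Γp t j := by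
  refine ⟨1 / (4 * (|d| + 1)), by positivity, ?_⟩
  intro Γm Γp _ _ hsub hsup hgm hgp h0
  set δ : ℝ := 1 / (4 * (|d| + 1)) with hδdef
  have habs : (0:ℝ) ≤ |d| := abs_nonneg d
  have hδ4 : δ ≤ 1/4 := by
    rw [hδdef, div_le_div_iff₀ (by positivity) (by norm_num)]
    nlinarith
  have hdδ : |d| * δ ≤ 1/4 := by
    rw [hδdef, mul_one_div, div_le_div_iff₀ (by positivity) (by norm_num)]
    nlinarith
  -- convenient gradient bounds
  have hgrad : ∀ (Γ : ℝ → ℤ → ℝ), (∀ t : ℝ, 0 ≤ t → ∀ j : ℤ, |Γ t (j + 1) - Γ t j| ≤ δ) →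
      ∀ t : ℝ, 0 ≤ t → ∀ j : ℤ,
      (|Γ t (j + 1) - Γ t j| ≤ 1/4 ∧ |d| * |Γ t (j + 1) - Γ t j| ≤ 1/4) ∧
      (|Γ t j - Γ t (j - 1)| ≤ 1/4 ∧ |d| * |Γ t j - Γ t (j - 1)| ≤ 1/4) := by
    intro Γ hg t ht j
    have h1 := hg t ht j
    have h2 := hg t ht (j - 1)
    rw [show j - 1 + 1 = j by ring] at h2
    refine ⟨⟨le_trans h1 hδ4, ?_⟩, ⟨le_trans h2 hδ4, ?_⟩⟩
    · exact le_trans (mul_le_mul_of_nonneg_left h1 habs) hdδ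
    · exact le_trans (mul_le_mul_of_nonneg_left h2 habs) hdδ
  -- central one-sided estimate on the difference of right-hand sides
  have FF : ∀ t : ℝ, 0 ≤ t → ∀ j : ℤ, ∀ S : ℝ,
      Γm t (j + 1) - Γp t (j + 1) ≤ S → Γm t (j - 1) - Γp t (j - 1) ≤ S →
      Γm t j - Γp t j ≤ S →
      mcfRHS c d (Γm t) j - mcfRHS c d (Γp t) j ≤ 6 * (S - (Γm t j - Γp t j)) := by
    intro t ht j S h1 h2 h3
    obtain ⟨⟨hP1, hP2⟩, ⟨hQ1, hQ2⟩⟩ := hgrad Γm hgm t ht j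
    obtain ⟨⟨hp1, hp2⟩, ⟨hq1, hq2⟩⟩ := hgrad Γp hgp t ht j
    rw [mcf_eq, mcf_eq]
    have hd := Gdiff_le d (Γp t (j+1) - Γp t j) (Γp t j - Γp t (j-1))
      (Γm t (j+1) - Γm t j) (Γm t j - Γm t (j-1)) hp1 hq1 hP1 hQ1 hp2 hq2 hP2 hQ2
    have hm1 : max ((Γm t (j+1) - Γm t j) - (Γp t (j+1) - Γp t j)) 0
        ≤ S - (Γm t j - Γp t j) := max_le (by linarith) (by linarith)
    have hm2 : max ((Γp t j - Γp t (j-1)) - (Γm t j - Γm t (j-1))) 0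
        ≤ S - (Γm t j - Γp t j) := max_le (by linarith) (by linarith)
    linarith
  -- uniform bound on the difference of right-hand sides
  have FFunif : ∀ t : ℝ, 0 ≤ t → ∀ j : ℤ,
      mcfRHS c d (Γm t) j - mcfRHS c d (Γp t) j ≤ 3 := by
    intro t ht j
    obtain ⟨⟨hP1, hP2⟩, ⟨hQ1, hQ2⟩⟩ := hgrad Γm hgm t ht j
    obtain ⟨⟨hp1, hp2⟩, ⟨hq1, hq2⟩⟩ := hgrad Γp hgp t ht j
    rw [mcf_eq, mcf_eq]
    have hd := Gdiff_le d (Γp t (j+1) - Γp t j) (Γp t j - Γp t (j-1))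
      (Γm t (j+1) - Γm t j) (Γm t j - Γm t (j-1)) hp1 hq1 hP1 hQ1 hp2 hq2 hP2 hQ2
    have e1 := abs_le.1 hP1; have e2 := abs_le.1 hp1
    have e3 := abs_le.1 hQ1; have e4 := abs_le.1 hq1
    have hm1 : max ((Γm t (j+1) - Γm t j) - (Γp t (j+1) - Γp t j)) 0 ≤ 1/2 :=
      max_le (by linarith [e1.1, e1.2, e2.1, e2.2]) (by norm_num)
    have hm2 : max ((Γp t j - Γp t (j-1)) - (Γm t j - Γm t (j-1))) 0 ≤ 1/2 :=
      max_le (by linarith [e3.1, e3.2, e4.1, e4.2]) (by norm_num)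
    linarith
  -- continuity
  have hcm : ∀ k : ℤ, ContinuousOn (fun s => Γm s k) (Ici (0:ℝ)) :=
    fun k s hs => ((hsub k s hs).choose_spec.1).continuousWithinAt
  have hcp : ∀ k : ℤ, ContinuousOn (fun s => Γp s k) (Ici (0:ℝ)) :=
    fun k s hs => ((hsup k s hs).choose_spec.1).continuousWithinAt
  have hcu : ∀ k : ℤ, ContinuousOn (fun s => Γm s k - Γp s k) (Ici (0:ℝ)) :=
    fun k => (hcm k).sub (hcp k)
  -- one-sided Lipschitz bound
  have hLip : ∀ k : ℤ, ∀ a x : ℝ, 0 ≤ a → a ≤ x →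
      Γm x k - Γp x k ≤ Γm a k - Γp a k + 4 * (x - a) := by
    intro k a x ha hax
    rcases eq_or_lt_of_le hax with rfl | hax'
    · simp
    have hanti : StrictAntiOn (fun s => Γm s k - Γp s k - 4 * s) (Icc a x) := by
      apply strictAntiOn_of_deriv_neg (convex_Icc a x)
      · exact (((hcu k).mono (Icc_subset_Ici_self.trans (by
          intro y hy; exact le_trans ha hy))).sub
          (continuous_const.mul continuous_id).continuousOn)
      · intro y hy
        rw [interior_Icc] at hy
        have hy0 : 0 < y := lt_of_le_of_lt ha hy.1
        obtain ⟨Dm, hDm, hDm'⟩ := hsub k y hy0.le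
        obtain ⟨Dp, hDp, hDp'⟩ := hsup k y hy0.le
        have hm := hDm.hasDerivAt (Ici_mem_nhds hy0)
        have hp := hDp.hasDerivAt (Ici_mem_nhds hy0)
        have h4 : HasDerivAt (fun s : ℝ => 4 * s) 4 y := by
          simpa using (hasDerivAt_id y).const_mul (4:ℝ)
        have hw : HasDerivAt (fun s => Γm s k - Γp s k - 4 * s) (Dm - Dp - 4) y :=
          (hm.sub hp).sub h4
        rw [hw.deriv]
        have := FFunif y hy0.le k
        linarith
    have := hanti (left_mem_Icc.2 hax) (right_mem_Icc.2 hax) hax'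
    simp only at this
    linarith
  -- main claim with ε
  have main : ∀ ε : ℝ, 0 < ε → ∀ s : ℝ, 0 ≤ s → ∀ k : ℤ,
      Γm s k - Γp s k ≤ ε * Real.exp (7 * s) := by
    intro ε hε
    by_contra hbad
    push_neg at hbad
    obtain ⟨s₀, hs₀, k₀, hk₀⟩ := hbad
    set Bad : Set ℝ := {s | 0 ≤ s ∧ ∃ k : ℤ, ε * Real.exp (7 * s) < Γm s k - Γp s k}
      with hBadDef
    have hBne : Bad.Nonempty := ⟨s₀, hs₀, k₀, hk₀⟩
    have hBbd : BddBelow Bad := ⟨0, fun y hy => hy.1⟩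
    set t₀ := sInf Bad with ht₀def
    have ht₀0 : 0 ≤ t₀ := le_csInf hBne fun y hy => hy.1
    -- Step A
    have stepA : ∀ k : ℤ, ∀ s : ℝ, 0 ≤ s → s ≤ t₀ →
        Γm s k - Γp s k ≤ ε * Real.exp (7 * s) := by
      have hlt : ∀ k : ℤ, ∀ s : ℝ, 0 ≤ s → s < t₀ →
          Γm s k - Γp s k ≤ ε * Real.exp (7 * s) := by
        intro k s hs hst
        have := notMem_of_lt_csInf hst hBbd
        rw [hBadDef] at this
        simp only [Set.mem_setOf_eq, not_and, not_exists, not_lt] at this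
        exact this hs k
      intro k s hs hst
      rcases lt_or_eq_of_le hst with h | heq
      · exact hlt k s hs h
      rw [heq] at hs ⊢
      rcases eq_or_lt_of_le hs with h | hs'
      · rw [← h]
        have := h0 k
        have hh : (0:ℝ) ≤ ε * Real.exp (7 * 0) := by positivity
        linarith
      · have hne : (𝓝[Ico 0 t₀] t₀).NeBot := by
          rw [← mem_closure_iff_nhdsWithin_neBot, closure_Ico (ne_of_lt hs')]
          exact ⟨hs, le_refl t₀⟩
        have htend : Tendsto (fun y => ε * Real.exp (7 * y) - (Γm y k - Γp y k))
            (𝓝[Ico 0 t₀] t₀) (𝓝 (ε * Real.exp (7 * t₀) - (Γm t₀ k - Γp t₀ k))) := by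
          have hcont : ContinuousOn (fun y => ε * Real.exp (7 * y) - (Γm y k - Γp y k))
              (Ici (0:ℝ)) :=
            ((continuous_const.mul (Real.continuous_exp.comp
              (continuous_const.mul continuous_id))).continuousOn).sub (hcu k)
          exact (hcont t₀ hs).mono Ico_subset_Ici_self
        have hev : ∀ᶠ y in 𝓝[Ico 0 t₀] t₀,
            (0:ℝ) ≤ ε * Real.exp (7 * y) - (Γm y k - Γp y k) := by
          filter_upwards [self_mem_nhdsWithin] with y hy
          have := hlt k y hy.1 hy.2
          linarith
        have := ge_of_tendsto htend hev
        linarith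
    -- the extension interval
    set η : ℝ := ε / 8 with hηdef
    have hη : 0 < η := by positivity
    have hIcc : ∀ x : ℝ, x ∈ Icc t₀ (t₀ + η) → ∀ k : ℤ,
        Γm x k - Γp x k ≤ ε * Real.exp (7 * x) := by
      intro x hx k
      set w : ℝ → ℝ := fun s => Γm s k - Γp s k - ε * Real.exp (7 * s) with hwdef
      by_contra hw
      push_neg at hw
      have hx0 : 0 ≤ x := le_trans ht₀0 hx.1
      have hxt0 : t₀ < x := by
        rcases lt_or_eq_of_le hx.1 with h | h
        · exact h
        · exact absurd (stepA k x hx0 (le_of_eq h.symm)) (not_le.2 hw)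
      have hwcont : ContinuousOn w (Ici (0:ℝ)) :=
        (hcu k).sub ((continuous_const.mul (Real.continuous_exp.comp
          (continuous_const.mul continuous_id))).continuousOn)
      set T : Set ℝ := {s | s ∈ Icc t₀ x ∧ w s ≤ 0} with hTdef
      have hTsub : T ⊆ Icc t₀ x := fun y hy => hy.1
      have hTne : T.Nonempty := ⟨t₀, ⟨le_rfl, hxt0.le⟩, by
        have := stepA k t₀ ht₀0 le_rfl
        simp only [hwdef]
        linarith⟩
      have hTbdd : BddAbove T := ⟨x, fun y hy => hy.1.2⟩
      have hTclosed : IsClosed T := by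
        have : T = Icc t₀ x ∩ w ⁻¹' (Iic 0) := by
          ext y; simp [hTdef, Set.mem_setOf_eq]
        rw [this]
        exact ContinuousOn.preimage_isClosed_of_isClosed
          (hwcont.mono (fun y hy => le_trans ht₀0 hy.1)) isClosed_Icc isClosed_Iic
      obtain ⟨τ, hτdef⟩ : ∃ τ : ℝ, τ = sSup T := ⟨_, rfl⟩
      have hτT : τ ∈ T := by rw [hτdef]; exact hTclosed.csSup_mem hTne hTbdd
      have hτ0 : 0 ≤ τ := le_trans ht₀0 hτT.1.1
      have hτx : τ < x := by
        rcases lt_or_eq_of_le hτT.1.2 with h | rfl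
        · exact h
        · exact absurd hτT.2 (by simp only [hwdef]; linarith)
      have hpos : ∀ y : ℝ, τ < y → y ≤ x → 0 < w y := by
        intro y hy1 hy2
        by_contra hc
        push_neg at hc
        have hyT : y ∈ T := ⟨⟨le_trans hτT.1.1 hy1.le, hy2⟩, hc⟩
        have := le_csSup hTbdd hyT
        rw [← hτdef] at this
        exact absurd this (not_le.2 hy1)
      -- strict decrease where w > 0
      have hanti : ∀ a : ℝ, τ < a → a ≤ x → w x ≤ w a := by
        intro a ha hax
        rcases eq_or_lt_of_le hax with rfl | hax'
        · exact le_rfl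
        have ha0 : 0 ≤ a := le_trans hτ0 ha.le
        have hSA : StrictAntiOn w (Icc a x) := by
          apply strictAntiOn_of_deriv_neg (convex_Icc a x)
          · exact hwcont.mono fun y hy => le_trans ha0 hy.1
          · intro y hy
            rw [interior_Icc] at hy
            have hy0 : 0 < y := lt_of_le_of_lt ha0 hy.1
            obtain ⟨Dm, hDm, hDm'⟩ := hsub k y hy0.le
            obtain ⟨Dp, hDp, hDp'⟩ := hsup k y hy0.le
            have hm := hDm.hasDerivAt (Ici_mem_nhds hy0)
            have hp := hDp.hasDerivAt (Ici_mem_nhds hy0)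
            have hexp : HasDerivAt (fun s : ℝ => ε * Real.exp (7 * s))
                (ε * (Real.exp (7 * y) * 7)) y := by
              have h1 : HasDerivAt (fun s : ℝ => 7 * s) 7 y := by
                simpa using (hasDerivAt_id y).const_mul (7:ℝ)
              have h2 := (Real.hasDerivAt_exp (7 * y)).comp y h1
              simpa [mul_comm] using h2.const_mul ε
            have hw' : HasDerivAt w (Dm - Dp - ε * (Real.exp (7 * y) * 7)) y :=
              (hm.sub hp).sub hexp
            rw [hw'.deriv]
            -- bounds at time y
            have hyIcc : y ∈ Icc t₀ (t₀ + η) :=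
              ⟨le_trans hτT.1.1 (le_trans ha.le hy.1.le), le_trans hy.2.le hx.2⟩
            have hwy : 0 < w y := hpos y (lt_trans ha hy.1) hy.2.le
            have hS : ∀ m : ℤ, Γm y m - Γp y m ≤ ε * Real.exp (7 * t₀) + 4 * η := by
              intro m
              have h1 := hLip m t₀ y ht₀0 hyIcc.1
              have h2 := stepA m t₀ ht₀0 le_rfl
              have h3 : y - t₀ ≤ η := by linarith [hyIcc.2]
              linarith
            have hFF := FF y hy0.le k (ε * Real.exp (7 * t₀) + 4 * η)
              (hS (k + 1)) (hS (k - 1)) (hS k)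
            have hmono : Real.exp (7 * t₀) ≤ Real.exp (7 * y) :=
              Real.exp_le_exp.2 (by linarith [hyIcc.1])
            have hexp1 : (1:ℝ) ≤ Real.exp (7 * y) :=
              Real.one_le_exp (by linarith)
            have huy : ε * Real.exp (7 * y) < Γm y k - Γp y k := by
              simp only [hwdef] at hwy; linarith
            have hd6 : Dm - Dp ≤ 6 * (ε * Real.exp (7 * t₀) + 4 * η - (Γm y k - Γp y k)) := by
              linarith
            have : ε * Real.exp (7 * t₀) + 4 * η - (Γm y k - Γp y k) ≤ 4 * η := by
              nlinarith
            nlinarith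
        have := hSA (left_mem_Icc.2 hax'.le) (right_mem_Icc.2 hax'.le) hax'
        linarith
      -- pass to the limit a → τ⁺
      have hlim : Tendsto w (𝓝[Ioi τ] τ) (𝓝 (w τ)) :=
        (hwcont τ hτ0).mono (fun y (hy : y ∈ Ioi τ) => le_trans hτ0 hy.le)
      have hev : ∀ᶠ a in 𝓝[Ioi τ] τ, w x ≤ w a := by
        filter_upwards [self_mem_nhdsWithin,
          mem_nhdsWithin_of_mem_nhds (Iio_mem_nhds hτx)] with a ha1 ha2
        exact hanti a ha1 (le_of_lt ha2)
      have := ge_of_tendsto hlim hev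
      have hwx : 0 < w x := by simp only [hwdef]; linarith
      have hwτ : w τ ≤ 0 := hτT.2
      linarith
    -- contradiction with the definition of t₀
    have hlt : sInf Bad < t₀ + η := by rw [← ht₀def]; linarith
    obtain ⟨b, hbBad, hblt⟩ := (csInf_lt_iff hBbd hBne).1 hlt
    have hbge : t₀ ≤ b := csInf_le hBbd hbBad
    obtain ⟨hb0, k, hk⟩ := hbBad
    exact absurd (hIcc b ⟨hbge, hblt.le⟩ k) (not_le.2 hk)
  -- conclude
  intro t ht j
  by_contra hcon
  push_neg at hcon
  set x := Γm t j - Γp t j with hxdef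
  have hx : 0 < x := by linarith
  have hE : 0 < Real.exp (7 * t) := Real.exp_pos _
  have := main (x / (2 * Real.exp (7 * t))) (by positivity) t ht j
  rw [div_mul_eq_mul_div, mul_comm] at this
  have h2 : Real.exp (7 * t) * x / (2 * Real.exp (7 * t)) = x / 2 := by
    field_simp
  rw [h2] at this
  linarith

end
end
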